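/- arXiv:2506.12146 — 3 statements merged into one kernel-verified Lean document; each statement's English description precedes it below -/
import Mathlib

section
/- The derived subgroup of the weak commutativity group χ(G) is the central product of D and L₁L₂: namely χ(G)' equals the join D ⊔ (L₁ ⊔ L₂), the commutator subgroup ⁅D, L₁ ⊔ L₂⁆ is trivial, and D ⊓ (L₁ ⊔ L₂) is contained in the centralizer of χ(G)' (every element of D ⊓ (L₁ ⊔ L₂) commutes with every element of χ(G)'). -/
open Subgroup

/-- The weak commutativity relations inside the free product `G ∗ G`. -/
def chiRel (G : Type*) [Group G] : Subgroup (Monoid.Coprod G G) :=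
  Subgroup.normalClosure
    {x | ∃ g : G, x = Monoid.Coprod.inl g * Monoid.Coprod.inr g *
      (Monoid.Coprod.inl g)⁻¹ * (Monoid.Coprod.inr g)⁻¹}

instance chiRel_normal (G : Type*) [Group G] : (chiRel G).Normal :=
  Subgroup.normalClosure_normal

/-- The weak commutativity group `χ(G)`. -/
def Chi (G : Type*) [Group G] : Type _ := Monoid.Coprod G G ⧸ chiRel G

instance (G : Type*) [Group G] : Group (Chi G) :=
  inferInstanceAs (Group (Monoid.Coprod G G ⧸ chiRel G))

/-- The canonical map `G → χ(G)`, `g ↦ g`. -/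
def chiIota1 (G : Type*) [Group G] : G →* Chi G :=
  (QuotientGroup.mk' (chiRel G)).comp Monoid.Coprod.inl

/-- The canonical map `G → χ(G)`, `g ↦ g^φ`. -/
def chiIota2 (G : Type*) [Group G] : G →* Chi G :=
  (QuotientGroup.mk' (chiRel G)).comp Monoid.Coprod.inr

/-- `G₁ ≤ χ(G)`. -/
def chiG1 (G : Type*) [Group G] : Subgroup (Chi G) := (chiIota1 G).range

/-- `G₂ = G^φ ≤ χ(G)`. -/
def chiG2 (G : Type*) [Group G] : Subgroup (Chi G) := (chiIota2 G).range

/-- `L = ⟨g⁻¹ g^φ : g ∈ G⟩`. -/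
def chiL (G : Type*) [Group G] : Subgroup (Chi G) :=
  Subgroup.closure {x | ∃ g : G, x = (chiIota1 G g)⁻¹ * chiIota2 G g}

/-- `D = ⁅G₁, G₂⁆`. -/
def chiD (G : Type*) [Group G] : Subgroup (Chi G) := ⁅chiG1 G, chiG2 G⁆

/-- `L₁ = ⁅L, G₁⁆`. -/
def chiL1 (G : Type*) [Group G] : Subgroup (Chi G) := ⁅chiL G, chiG1 G⁆

/-- `L₂ = ⁅L, G₂⁆`. -/
def chiL2 (G : Type*) [Group G] : Subgroup (Chi G) := ⁅chiL G, chiG2 G⁆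

/-- `R = ⁅⁅G₁, L⁆, G₂⁆`. -/
def chiR (G : Type*) [Group G] : Subgroup (Chi G) := ⁅⁅chiG1 G, chiL G⁆, chiG2 G⁆

/-- `L₁₂ = ⁅L₁, L₂⁆`. -/
def chiL12 (G : Type*) [Group G] : Subgroup (Chi G) := ⁅chiL1 G, chiL2 G⁆

open scoped commutatorElement

namespace ChiProof

variable {G : Type*} [Group G]

/-- image of `g` in the first factor -/
def ii (g : G) : Chi G := chiIota1 G g
/-- image of `g` in the second factor -/
def jj (g : G) : Chi G := chiIota2 G g
/-- `l(g) = g⁻¹ g^φ` -/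
def ll (g : G) : Chi G := (chiIota1 G g)⁻¹ * chiIota2 G g
/-- conjugation -/
def cjc (a x : Chi G) : Chi G := a * x * a⁻¹
/-- `d(g,h) = [g, h^φ]` (mathlib convention) -/
def dd (g h : G) : Chi G := ⁅ii g, jj h⁆

@[simp] lemma ii_mul (g h : G) : ii (g * h) = (ii g : Chi G) * ii h := map_mul _ _ _
@[simp] lemma jj_mul (g h : G) : jj (g * h) = (jj g : Chi G) * jj h := map_mul _ _ _
@[simp] lemma ii_inv (g : G) : ii (g⁻¹) = (ii g : Chi G)⁻¹ := map_inv _ _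
@[simp] lemma jj_inv (g : G) : jj (g⁻¹) = (jj g : Chi G)⁻¹ := map_inv _ _
@[simp] lemma ii_one : (ii (1 : G) : Chi G) = 1 := map_one _
@[simp] lemma jj_one : (jj (1 : G) : Chi G) = 1 := map_one _
@[simp] lemma ll_one : (ll (1 : G) : Chi G) = 1 := by
  show (ii (1 : G) : Chi G)⁻¹ * jj 1 = 1
  rw [ii_one, jj_one, inv_one, one_mul]

lemma ll_eq (g : G) : (ll g : Chi G) = (ii g)⁻¹ * jj g := rfl

lemma comm_base (g : G) : Commute (ii g : Chi G) (jj g) := by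
  have h : (Monoid.Coprod.inl g * Monoid.Coprod.inr g * (Monoid.Coprod.inl g)⁻¹ *
      (Monoid.Coprod.inr g)⁻¹ : Monoid.Coprod G G) ∈ chiRel G :=
    Subgroup.subset_normalClosure ⟨g, rfl⟩
  have h2 : (QuotientGroup.mk' (chiRel G)) (Monoid.Coprod.inl g * Monoid.Coprod.inr g *
      (Monoid.Coprod.inl g)⁻¹ * (Monoid.Coprod.inr g)⁻¹) = 1 := by
    rw [QuotientGroup.mk'_apply, QuotientGroup.eq_one_iff]
    exact h
  have h3 : (ii g : Chi G) * jj g * (ii g)⁻¹ * (jj g)⁻¹ = 1 := by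
    exact h2
  have h4 : ⁅(ii g : Chi G), jj g⁆ = 1 := by rw [commutatorElement_def]; exact h3
  exact commutatorElement_eq_one_iff_commute.mp h4

lemma cj_mul (a x y : Chi G) : cjc a (x * y) = cjc a x * cjc a y := by unfold cjc; group
lemma cj_inv (a x : Chi G) : cjc a x⁻¹ = (cjc a x)⁻¹ := by unfold cjc; group
lemma cj_cj (a b x : Chi G) : cjc a (cjc b x) = cjc (a * b) x := by unfold cjc; group

lemma m2' (g h k : G) : cjc (ii g) (dd h k) = dd (g * h) k * (dd g k)⁻¹ := by
  simp only [cjc, dd, commutatorElement_def, ii_mul]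
  group

lemma m1'' (g k h : G) : (dd k (g * h) : Chi G) = dd k g * cjc (jj g) (dd k h) := by
  simp only [cjc, dd, commutatorElement_def, jj_mul]
  group

lemma star1 (x y : G) : cjc (ii x) (dd y x) * cjc (jj x) (dd x y) = 1 := by
  have hx := comm_base x
  have hy := comm_base y
  have hxy : (ii x * ii y : Chi G) * (jj x * jj y) = (jj x * jj y) * (ii x * ii y) := by
    have := (comm_base (x * y)).eq
    simpa [ii_mul, jj_mul] using this
  have e1 : ((jj x)⁻¹ : Chi G) * (ii x)⁻¹ * (jj x * ii x) = 1 := by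
    rw [← hx.eq]; group
  have e2 : ((ii y)⁻¹ : Chi G) * jj y = jj y * (ii y)⁻¹ := hy.inv_left.eq
  calc cjc (ii x) (dd y x) * cjc (jj x) (dd x y)
      = (ii x * ii y * jj x * (ii y)⁻¹) * ((jj x)⁻¹ * (ii x)⁻¹ * (jj x * ii x)) *
        (jj y * (ii x)⁻¹ * (jj y)⁻¹ * (jj x)⁻¹) := by
        simp only [cjc, dd, commutatorElement_def]; group
    _ = (ii x * ii y * jj x) * ((ii y)⁻¹ * jj y) * ((ii x)⁻¹ * (jj y)⁻¹ * (jj x)⁻¹) := by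
        rw [e1]; group
    _ = (ii x * ii y * jj x) * (jj y * (ii y)⁻¹) * ((ii x)⁻¹ * (jj y)⁻¹ * (jj x)⁻¹) := by
        rw [e2]
    _ = ((ii x * ii y) * (jj x * jj y)) * ((ii x * ii y)⁻¹ * (jj x * jj y)⁻¹) := by group
    _ = ((jj x * jj y) * (ii x * ii y)) * ((ii x * ii y)⁻¹ * (jj x * jj y)⁻¹) := by rw [hxy]
    _ = 1 := by group

lemma star1' (x y : G) : cjc (ii x) (dd y x) = (cjc (jj x) (dd x y))⁻¹ :=
  eq_inv_of_mul_eq_one_left (by rw [← star1 x y])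

end ChiProof
namespace ChiProof

variable {G : Type*} [Group G]

lemma star3 (g h k : G) :
    cjc (ii k * ii g) (dd h k) = (cjc (jj k * jj g) (dd k h))⁻¹ := by
  calc cjc (ii k * ii g) (dd h k)
      = cjc (ii k) (cjc (ii g) (dd h k)) := by rw [cj_cj]
    _ = cjc (ii k) (dd (g * h) k * (dd g k)⁻¹) := by rw [m2']
    _ = cjc (ii k) (dd (g * h) k) * (cjc (ii k) (dd g k))⁻¹ := by rw [cj_mul, cj_inv]
    _ = (cjc (jj k) (dd k (g * h)))⁻¹ * cjc (jj k) (dd k g) := by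
        rw [star1' k (g * h), star1' k g]; group
    _ = (cjc (jj k) (dd k g * cjc (jj g) (dd k h)))⁻¹ * cjc (jj k) (dd k g) := by rw [← m1'']
    _ = (cjc (jj k) (cjc (jj g) (dd k h)))⁻¹ * (cjc (jj k) (dd k g))⁻¹ *
        cjc (jj k) (dd k g) := by rw [cj_mul]; group
    _ = (cjc (jj k * jj g) (dd k h))⁻¹ := by rw [cj_cj]; group

lemma keyconj (h k m : G) :
    cjc (ii m) (cjc (ii k) (dd h k)) = cjc (jj m) (cjc (ii k) (dd h k)) := by
  have h1 := star3 (k⁻¹ * m * k) h k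
  have e1 : (ii k : Chi G) * ii (k⁻¹ * m * k) = ii m * ii k := by
    rw [← ii_mul, ← ii_mul]; congr 1; group
  have e2 : (jj k : Chi G) * jj (k⁻¹ * m * k) = jj m * jj k := by
    rw [← jj_mul, ← jj_mul]; congr 1; group
  rw [e1, e2, ← cj_cj, ← cj_cj] at h1
  rw [h1, star1' k h, cj_inv]

lemma commPll (h k m : G) : Commute (cjc (ii k) (dd h k)) (ll m) := by
  have e : (ii m : Chi G) * cjc (ii k) (dd h k) * (ii m)⁻¹
      = jj m * cjc (ii k) (dd h k) * (jj m)⁻¹ := keyconj h k m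
  rw [commute_iff_eq]
  calc cjc (ii k) (dd h k) * ll m
      = (ii m)⁻¹ * (ii m * cjc (ii k) (dd h k) * (ii m)⁻¹) * jj m := by
        rw [ll_eq]; group
    _ = (ii m)⁻¹ * (jj m * cjc (ii k) (dd h k) * (jj m)⁻¹) * jj m := by rw [e]
    _ = ll m * cjc (ii k) (dd h k) := by rw [ll_eq]; group

lemma conj_i_ll (y m : G) :
    (ii y : Chi G) * ll m * (ii y)⁻¹ = ll (m * y⁻¹) * (ll y⁻¹)⁻¹ := by
  simp only [ll_eq, ii_mul, jj_mul, ii_inv, jj_inv]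
  group

lemma conj_j_ll (y m : G) :
    (jj y : Chi G) * ll m * (jj y)⁻¹ = (ll y⁻¹)⁻¹ * ll (m * y⁻¹) := by
  simp only [ll_eq, ii_mul, jj_mul, ii_inv, jj_inv]
  group

lemma keyCommute (h k z : G) : Commute (dd h k : Chi G) (ll z) := by
  have q : ∀ x : G, Commute (dd h k : Chi G) (ll (x * k) * (ll k)⁻¹) := by
    intro x
    have c := (commPll h k x).map (MulAut.conj ((ii k : Chi G)⁻¹))
    have d1 : (MulAut.conj ((ii k : Chi G)⁻¹)) (cjc (ii k) (dd h k)) = dd h k := by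
      simp only [MulAut.conj_apply, cjc]; group
    have d2 : (MulAut.conj ((ii k : Chi G)⁻¹)) (ll x) = ll (x * k) * (ll k)⁻¹ := by
      have := conj_i_ll k⁻¹ x
      simp only [ii_inv, inv_inv] at this
      simp only [MulAut.conj_apply, inv_inv]
      exact this
    rwa [d1, d2] at c
  have c2 : Commute (dd h k : Chi G) (ll k) := by
    have h1 := q k⁻¹
    rw [inv_mul_cancel, ll_one, one_mul] at h1
    have h2 := h1.inv_right
    rwa [inv_inv] at h2
  have h1 := q (z * k⁻¹)
  rw [inv_mul_cancel_right] at h1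
  have h2 := h1.mul_right c2
  rwa [inv_mul_cancel_right] at h2

end ChiProof
namespace ChiProof

variable {G : Type*} [Group G]

lemma chiL_eq : chiL G =
    Subgroup.closure {x | ∃ g : G, x = (chiIota1 G g)⁻¹ * chiIota2 G g} := rfl

lemma chiD_eq : chiD G = ⁅chiG1 G, chiG2 G⁆ := rfl

lemma commEl_mul_right (a b c : Chi G) : ⁅a, b * c⁆ = ⁅a, b⁆ * (b * ⁅a, c⁆ * b⁻¹) := by
  simp only [commutatorElement_def]; group

lemma conj_commEl (c x y : Chi G) : c * ⁅x, y⁆ * c⁻¹ = ⁅c * x * c⁻¹, c * y * c⁻¹⁆ := by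
  simp only [commutatorElement_def]; group

lemma g1_sup_g2 : chiG1 G ⊔ chiG2 G = ⊤ := by
  have h1 : chiG1 G
      = (Monoid.Coprod.inl : G →* Monoid.Coprod G G).range.map (QuotientGroup.mk' (chiRel G)) :=
    MonoidHom.range_comp _ _
  have h2 : chiG2 G
      = (Monoid.Coprod.inr : G →* Monoid.Coprod G G).range.map (QuotientGroup.mk' (chiRel G)) :=
    MonoidHom.range_comp _ _
  rw [h1, h2]
  show Subgroup.map (QuotientGroup.mk' (chiRel G)) _ ⊔ Subgroup.map (QuotientGroup.mk' (chiRel G)) _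
    = (⊤ : Subgroup (Monoid.Coprod G G ⧸ chiRel G))
  rw [← Subgroup.map_sup, Monoid.Coprod.range_inl_sup_range_inr,
    Subgroup.map_top_of_surjective _ (QuotientGroup.mk'_surjective _)]

lemma mem_normalizer_of_closure {T : Set (Chi G)} {x : Chi G}
    (h1 : ∀ t ∈ T, x * t * x⁻¹ ∈ Subgroup.closure T)
    (h2 : ∀ t ∈ T, x⁻¹ * t * x ∈ Subgroup.closure T) :
    x ∈ Subgroup.normalizer (Subgroup.closure T : Set (Chi G)) := by
  have key : ∀ y : Chi G, (∀ t ∈ T, y * t * y⁻¹ ∈ Subgroup.closure T) →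
      ∀ h ∈ Subgroup.closure T, y * h * y⁻¹ ∈ Subgroup.closure T := by
    intro y hy h hh
    induction hh using Subgroup.closure_induction with
    | mem t ht => exact hy t ht
    | one => simpa using one_mem _
    | mul a b ha hb iha ihb =>
        have e : y * (a * b) * y⁻¹ = (y * a * y⁻¹) * (y * b * y⁻¹) := by group
        rw [e]; exact mul_mem iha ihb
    | inv a ha iha =>
        have e : y * a⁻¹ * y⁻¹ = (y * a * y⁻¹)⁻¹ := by group
        rw [e]; exact inv_mem iha
  rw [Subgroup.mem_normalizer_iff]
  intro h
  constructor
  · exact fun hh => key x h1 h hh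
  · intro hh
    have h2' : ∀ t ∈ T, x⁻¹ * t * (x⁻¹)⁻¹ ∈ Subgroup.closure T := by
      intro t ht; rw [inv_inv]; exact h2 t ht
    have := key x⁻¹ h2' (x * h * x⁻¹) hh
    have e : x⁻¹ * (x * h * x⁻¹) * (x⁻¹)⁻¹ = h := by group
    rwa [e] at this

lemma normal_of_gen_norm (H : Subgroup (Chi G))
    (h1 : ∀ g : G, (ii g : Chi G) ∈ Subgroup.normalizer (H : Set (Chi G)))
    (h2 : ∀ g : G, (jj g : Chi G) ∈ Subgroup.normalizer (H : Set (Chi G))) : H.Normal := by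
  rw [← Subgroup.normalizer_eq_top_iff, eq_top_iff, ← g1_sup_g2]
  apply sup_le
  · rintro x ⟨g, rfl⟩; exact h1 g
  · rintro x ⟨g, rfl⟩; exact h2 g

lemma chiL_normal : (chiL G).Normal := by
  apply normal_of_gen_norm
  · intro y
    rw [chiL_eq]
    have main : ∀ (y : G), ∀ t ∈ {x | ∃ g : G, x = (chiIota1 G g)⁻¹ * chiIota2 G g},
        (ii y : Chi G) * t * (ii y)⁻¹ ∈
          Subgroup.closure {x | ∃ g : G, x = (chiIota1 G g)⁻¹ * chiIota2 G g} := by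
      rintro y t ⟨m, rfl⟩
      have e := conj_i_ll y m
      rw [show ((chiIota1 G m)⁻¹ * chiIota2 G m : Chi G) = ll m from rfl, e]
      exact mul_mem (Subgroup.subset_closure ⟨m * y⁻¹, rfl⟩)
        (inv_mem (Subgroup.subset_closure ⟨y⁻¹, rfl⟩))
    apply mem_normalizer_of_closure (main y)
    intro t ht
    have := main y⁻¹ t ht
    simpa only [ii_inv, inv_inv] using this
  · intro y
    rw [chiL_eq]
    have main : ∀ (y : G), ∀ t ∈ {x | ∃ g : G, x = (chiIota1 G g)⁻¹ * chiIota2 G g},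
        (jj y : Chi G) * t * (jj y)⁻¹ ∈
          Subgroup.closure {x | ∃ g : G, x = (chiIota1 G g)⁻¹ * chiIota2 G g} := by
      rintro y t ⟨m, rfl⟩
      have e := conj_j_ll y m
      rw [show ((chiIota1 G m)⁻¹ * chiIota2 G m : Chi G) = ll m from rfl, e]
      exact mul_mem (inv_mem (Subgroup.subset_closure ⟨y⁻¹, rfl⟩))
        (Subgroup.subset_closure ⟨m * y⁻¹, rfl⟩)
    apply mem_normalizer_of_closure (main y)
    intro t ht
    have := main y⁻¹ t ht
    simpa only [jj_inv, inv_inv] using this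

lemma conj_i_dd (y g k : G) : (ii y : Chi G) * ⁅(ii g : Chi G), jj k⁆ * (ii y)⁻¹
    = ⁅(ii (y * g) : Chi G), jj k⁆ * ⁅(ii y : Chi G), jj k⁆⁻¹ := by
  simp only [commutatorElement_def, ii_mul]; group

lemma conj_j_dd (y g k : G) : (jj y : Chi G) * ⁅(ii g : Chi G), jj k⁆ * (jj y)⁻¹
    = ⁅(ii g : Chi G), jj y⁆⁻¹ * ⁅(ii g : Chi G), jj (y * k)⁆ := by
  simp only [commutatorElement_def, jj_mul]; group

lemma chiD_normal : (chiD G).Normal := by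
  apply normal_of_gen_norm
  · intro y
    rw [chiD_eq, Subgroup.commutator_def]
    have main : ∀ (y : G), ∀ t ∈ {g | ∃ g₁ ∈ chiG1 G, ∃ g₂ ∈ chiG2 G, ⁅g₁, g₂⁆ = g},
        (ii y : Chi G) * t * (ii y)⁻¹ ∈
          Subgroup.closure {g | ∃ g₁ ∈ chiG1 G, ∃ g₂ ∈ chiG2 G, ⁅g₁, g₂⁆ = g} := by
      rintro y t ⟨p, hp, q, hq, rfl⟩
      obtain ⟨g, rfl⟩ := hp
      obtain ⟨k, rfl⟩ := hq
      rw [show (chiIota1 G g : Chi G) = ii g from rfl, show (chiIota2 G k : Chi G) = jj k from rfl,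
        conj_i_dd]
      exact mul_mem (Subgroup.subset_closure ⟨ii (y * g), ⟨y * g, rfl⟩, jj k, ⟨k, rfl⟩, rfl⟩)
        (inv_mem (Subgroup.subset_closure ⟨ii y, ⟨y, rfl⟩, jj k, ⟨k, rfl⟩, rfl⟩))
    apply mem_normalizer_of_closure (main y)
    intro t ht
    have := main y⁻¹ t ht
    simpa only [ii_inv, inv_inv] using this
  · intro y
    rw [chiD_eq, Subgroup.commutator_def]
    have main : ∀ (y : G), ∀ t ∈ {g | ∃ g₁ ∈ chiG1 G, ∃ g₂ ∈ chiG2 G, ⁅g₁, g₂⁆ = g},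
        (jj y : Chi G) * t * (jj y)⁻¹ ∈
          Subgroup.closure {g | ∃ g₁ ∈ chiG1 G, ∃ g₂ ∈ chiG2 G, ⁅g₁, g₂⁆ = g} := by
      rintro y t ⟨p, hp, q, hq, rfl⟩
      obtain ⟨g, rfl⟩ := hp
      obtain ⟨k, rfl⟩ := hq
      rw [show (chiIota1 G g : Chi G) = ii g from rfl, show (chiIota2 G k : Chi G) = jj k from rfl,
        conj_j_dd]
      exact mul_mem (inv_mem (Subgroup.subset_closure ⟨ii g, ⟨g, rfl⟩, jj y, ⟨y, rfl⟩, rfl⟩))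
        (Subgroup.subset_closure ⟨ii g, ⟨g, rfl⟩, jj (y * k), ⟨y * k, rfl⟩, rfl⟩)
    apply mem_normalizer_of_closure (main y)
    intro t ht
    have := main y⁻¹ t ht
    simpa only [jj_inv, inv_inv] using this

lemma comm_dd_L (g h : G) : ∀ b ∈ chiL G, Commute (dd g h : Chi G) b := by
  intro b hb
  rw [chiL_eq] at hb
  induction hb using Subgroup.closure_induction with
  | mem x hx => obtain ⟨m, rfl⟩ := hx; exact keyCommute g h m
  | one => exact Commute.one_right _
  | mul u v hu hv ihu ihv => exact ihu.mul_right ihv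
  | inv u hu ihu => exact ihu.inv_right

lemma chiD_le_centralizer : chiD G ≤ Subgroup.centralizer (chiL G : Set (Chi G)) := by
  rw [chiD_eq, Subgroup.commutator_le]
  rintro p ⟨g, rfl⟩ q ⟨h, rfl⟩
  rw [Subgroup.mem_centralizer_iff]
  intro b hb
  exact ((comm_dd_L g h b hb).symm).eq

lemma allCommuteDL : ∀ a ∈ chiD G, ∀ b ∈ chiL G, Commute a b := by
  intro a ha b hb
  have := Subgroup.mem_centralizer_iff.mp (chiD_le_centralizer ha) b hb
  exact (commute_iff_eq _ _).mpr this.symm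

end ChiProof
namespace ChiProof

variable {G : Type*} [Group G]

lemma ll_mem_L (g : G) : (ll g : Chi G) ∈ chiL G := Subgroup.subset_closure ⟨g, rfl⟩

lemma chiL1_eq : chiL1 G =
    Subgroup.closure {g | ∃ g₁ ∈ chiL G, ∃ g₂ ∈ chiG1 G, ⁅g₁, g₂⁆ = g} := rfl

lemma chiL2_eq : chiL2 G =
    Subgroup.closure {g | ∃ g₁ ∈ chiL G, ∃ g₂ ∈ chiG2 G, ⁅g₁, g₂⁆ = g} := rfl

lemma chiL1_normal : (chiL1 G).Normal := by
  have hLn := chiL_normal (G := G)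
  apply normal_of_gen_norm
  · intro y
    rw [chiL1_eq]
    have main : ∀ (y : G), ∀ t ∈ {g | ∃ g₁ ∈ chiL G, ∃ g₂ ∈ chiG1 G, ⁅g₁, g₂⁆ = g},
        (ii y : Chi G) * t * (ii y)⁻¹ ∈
          Subgroup.closure {g | ∃ g₁ ∈ chiL G, ∃ g₂ ∈ chiG1 G, ⁅g₁, g₂⁆ = g} := by
      rintro y t ⟨l, hl, a, ha, rfl⟩
      obtain ⟨g, rfl⟩ := ha
      rw [conj_commEl]
      apply Subgroup.subset_closure
      refine ⟨ii y * l * (ii y)⁻¹, hLn.conj_mem l hl (ii y), _, ⟨y * g * y⁻¹, ?_⟩, rfl⟩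
      show (ii (y * g * y⁻¹) : Chi G) = ii y * chiIota1 G g * (ii y)⁻¹
      simp only [ii_mul, ii_inv]
      rfl
    apply mem_normalizer_of_closure (main y)
    intro t ht
    have := main y⁻¹ t ht
    simpa only [ii_inv, inv_inv] using this
  · intro y
    rw [chiL1_eq]
    have main : ∀ (y : G), ∀ t ∈ {g | ∃ g₁ ∈ chiL G, ∃ g₂ ∈ chiG1 G, ⁅g₁, g₂⁆ = g},
        (jj y : Chi G) * t * (jj y)⁻¹ ∈
          Subgroup.closure {g | ∃ g₁ ∈ chiL G, ∃ g₂ ∈ chiG1 G, ⁅g₁, g₂⁆ = g} := by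
      rintro y t ⟨l, hl, a, ha, rfl⟩
      obtain ⟨g, rfl⟩ := ha
      have hl' : (jj y : Chi G) * l * (jj y)⁻¹ ∈ chiL G := hLn.conj_mem l hl (jj y)
      have e0 : (jj y : Chi G) * chiIota1 G g * (jj y)⁻¹
          = ii g * ⁅(ii (g⁻¹) : Chi G), jj y⁆ := by
        simp only [commutatorElement_def, ii_inv]
        show (jj y : Chi G) * ii g * (jj y)⁻¹ = _
        group
      have hw : ⁅(ii (g⁻¹) : Chi G), jj y⁆ ∈ chiD G := by
        rw [chiD_eq]; exact Subgroup.commutator_mem_commutator ⟨g⁻¹, rfl⟩ ⟨y, rfl⟩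
      have hcw : ⁅(jj y : Chi G) * l * (jj y)⁻¹, ⁅(ii (g⁻¹) : Chi G), jj y⁆⁆ = 1 :=
        commutatorElement_eq_one_iff_commute.mpr ((allCommuteDL _ hw _ hl').symm)
      rw [conj_commEl, e0, commEl_mul_right, hcw]
      have e1 : (ii g : Chi G) * 1 * (ii g)⁻¹ = 1 := by group
      rw [e1, mul_one]
      exact Subgroup.subset_closure ⟨_, hl', ii g, ⟨g, rfl⟩, rfl⟩
    apply mem_normalizer_of_closure (main y)
    intro t ht
    have := main y⁻¹ t ht
    simpa only [jj_inv, inv_inv] using this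

lemma chiL2_normal : (chiL2 G).Normal := by
  have hLn := chiL_normal (G := G)
  apply normal_of_gen_norm
  · intro y
    rw [chiL2_eq]
    have main : ∀ (y : G), ∀ t ∈ {g | ∃ g₁ ∈ chiL G, ∃ g₂ ∈ chiG2 G, ⁅g₁, g₂⁆ = g},
        (ii y : Chi G) * t * (ii y)⁻¹ ∈
          Subgroup.closure {g | ∃ g₁ ∈ chiL G, ∃ g₂ ∈ chiG2 G, ⁅g₁, g₂⁆ = g} := by
      rintro y t ⟨l, hl, a, ha, rfl⟩
      obtain ⟨g, rfl⟩ := ha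
      have hl' : (ii y : Chi G) * l * (ii y)⁻¹ ∈ chiL G := hLn.conj_mem l hl (ii y)
      have e0 : (ii y : Chi G) * chiIota2 G g * (ii y)⁻¹
          = jj g * ⁅(jj (g⁻¹) : Chi G), ii y⁆ := by
        simp only [commutatorElement_def, jj_inv]
        show (ii y : Chi G) * jj g * (ii y)⁻¹ = _
        group
      have hw : ⁅(jj (g⁻¹) : Chi G), ii y⁆ ∈ chiD G := by
        have h1 : ⁅(ii y : Chi G), jj (g⁻¹)⁆ ∈ chiD G := by
          rw [chiD_eq]; exact Subgroup.commutator_mem_commutator ⟨y, rfl⟩ ⟨g⁻¹, rfl⟩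
        rw [← commutatorElement_inv (ii y) (jj (g⁻¹))]
        exact inv_mem h1
      have hcw : ⁅(ii y : Chi G) * l * (ii y)⁻¹, ⁅(jj (g⁻¹) : Chi G), ii y⁆⁆ = 1 :=
        commutatorElement_eq_one_iff_commute.mpr ((allCommuteDL _ hw _ hl').symm)
      rw [conj_commEl, e0, commEl_mul_right, hcw]
      have e1 : (jj g : Chi G) * 1 * (jj g)⁻¹ = 1 := by group
      rw [e1, mul_one]
      exact Subgroup.subset_closure ⟨_, hl', jj g, ⟨g, rfl⟩, rfl⟩
    apply mem_normalizer_of_closure (main y)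
    intro t ht
    have := main y⁻¹ t ht
    simpa only [ii_inv, inv_inv] using this
  · intro y
    rw [chiL2_eq]
    have main : ∀ (y : G), ∀ t ∈ {g | ∃ g₁ ∈ chiL G, ∃ g₂ ∈ chiG2 G, ⁅g₁, g₂⁆ = g},
        (jj y : Chi G) * t * (jj y)⁻¹ ∈
          Subgroup.closure {g | ∃ g₁ ∈ chiL G, ∃ g₂ ∈ chiG2 G, ⁅g₁, g₂⁆ = g} := by
      rintro y t ⟨l, hl, a, ha, rfl⟩
      obtain ⟨g, rfl⟩ := ha
      rw [conj_commEl]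
      apply Subgroup.subset_closure
      refine ⟨jj y * l * (jj y)⁻¹, hLn.conj_mem l hl (jj y), _, ⟨y * g * y⁻¹, ?_⟩, rfl⟩
      show (jj (y * g * y⁻¹) : Chi G) = jj y * chiIota2 G g * (jj y)⁻¹
      simp only [jj_mul, jj_inv]
      rfl
    apply mem_normalizer_of_closure (main y)
    intro t ht
    have := main y⁻¹ t ht
    simpa only [jj_inv, inv_inv] using this

lemma chiL1_le_chiL : chiL1 G ≤ chiL G := by
  have := chiL_normal (G := G)
  exact Subgroup.commutator_le_left (H₁ := chiL G) (H₂ := chiG1 G)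

lemma chiL2_le_chiL : chiL2 G ≤ chiL G := by
  have := chiL_normal (G := G)
  exact Subgroup.commutator_le_left (H₁ := chiL G) (H₂ := chiG2 G)

end ChiProof
namespace ChiProof

variable {G : Type*} [Group G]

lemma chiL1_le_N : chiL1 G ≤ chiD G ⊔ (chiL1 G ⊔ chiL2 G) :=
  le_sup_left.trans le_sup_right

lemma chiL2_le_N : chiL2 G ≤ chiD G ⊔ (chiL1 G ⊔ chiL2 G) :=
  le_sup_right.trans le_sup_right

lemma mem_N_ii_jj (g h : G) :
    ⁅(ii g : Chi G), jj h⁆ ∈ chiD G ⊔ (chiL1 G ⊔ chiL2 G) := by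
  apply le_sup_left (a := chiD G)
  rw [chiD_eq]
  exact Subgroup.commutator_mem_commutator ⟨g, rfl⟩ ⟨h, rfl⟩

lemma mem_N_jj_ii (g h : G) :
    ⁅(jj g : Chi G), ii h⁆ ∈ chiD G ⊔ (chiL1 G ⊔ chiL2 G) := by
  rw [← commutatorElement_inv (ii h) (jj g)]
  exact inv_mem (mem_N_ii_jj h g)

lemma mem_N_ii_ii (g h : G) :
    ⁅(ii g : Chi G), ii h⁆ ∈ chiD G ⊔ (chiL1 G ⊔ chiL2 G) := by
  have hL1n := chiL1_normal (G := G)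
  have hpure : ⁅(ii g : Chi G), ii h⁆
      = ⁅(ii g : Chi G), jj h⁆ * (ii h * ⁅(ii g : Chi G), ll h⁆ * (ii h)⁻¹)⁻¹ := by
    simp only [commutatorElement_def, ll_eq]; group
  rw [hpure]
  have h2 : ⁅(ii g : Chi G), ll h⁆ ∈ chiL1 G := by
    have h3 : ⁅(ll h : Chi G), ii g⁆ ∈ chiL1 G :=
      Subgroup.commutator_mem_commutator (ll_mem_L h) ⟨g, rfl⟩
    rw [← commutatorElement_inv (ll h) (ii g)]
    exact inv_mem h3
  have h3 : (ii h : Chi G) * ⁅(ii g : Chi G), ll h⁆ * (ii h)⁻¹ ∈ chiL1 G :=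
    hL1n.conj_mem _ h2 _
  exact mul_mem (mem_N_ii_jj g h) (inv_mem (chiL1_le_N h3))

lemma mem_N_jj_jj (g h : G) :
    ⁅(jj g : Chi G), jj h⁆ ∈ chiD G ⊔ (chiL1 G ⊔ chiL2 G) := by
  have hL2n := chiL2_normal (G := G)
  have hpure : ⁅(jj g : Chi G), jj h⁆
      = ⁅(jj g : Chi G), ii h⁆ * (jj h * ⁅(jj g : Chi G), (ll h)⁻¹⁆ * (jj h)⁻¹)⁻¹ := by
    simp only [commutatorElement_def, ll_eq]; group
  rw [hpure]
  have h2 : ⁅(jj g : Chi G), (ll h)⁻¹⁆ ∈ chiL2 G := by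
    have h3 : ⁅((ll h : Chi G))⁻¹, jj g⁆ ∈ chiL2 G :=
      Subgroup.commutator_mem_commutator (inv_mem (ll_mem_L h)) ⟨g, rfl⟩
    rw [← commutatorElement_inv ((ll h : Chi G))⁻¹ (jj g)]
    exact inv_mem h3
  have h3 : (jj h : Chi G) * ⁅(jj g : Chi G), (ll h)⁻¹⁆ * (jj h)⁻¹ ∈ chiL2 G :=
    hL2n.conj_mem _ h2 _
  exact mul_mem (mem_N_jj_ii g h) (inv_mem (chiL2_le_N h3))

lemma commute_all_of_closure_eq_top {H : Type*} [Group H] {T : Set H}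
    (htop : Subgroup.closure T = ⊤) (hT : ∀ a ∈ T, ∀ b ∈ T, Commute a b) :
    ∀ a b : H, Commute a b := by
  have h1 : ∀ a ∈ T, ∀ b : H, Commute a b := by
    intro a ha b
    have hb : b ∈ Subgroup.closure T := by rw [htop]; exact Subgroup.mem_top b
    induction hb using Subgroup.closure_induction with
    | mem t ht => exact hT a ha t ht
    | one => exact Commute.one_right _
    | mul u v hu hv ihu ihv => exact ihu.mul_right ihv
    | inv u hu ihu => exact ihu.inv_right
  intro a b
  have ha : a ∈ Subgroup.closure T := by rw [htop]; exact Subgroup.mem_top a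
  induction ha using Subgroup.closure_induction with
  | mem t ht => exact h1 t ht b
  | one => exact Commute.one_left _
  | mul u v hu hv ihu ihv => exact ihu.mul_left ihv
  | inv u hu ihu => exact ihu.inv_left

lemma N_normal : (chiD G ⊔ (chiL1 G ⊔ chiL2 G)).Normal := by
  have hDn := chiD_normal (G := G)
  have hL1n := chiL1_normal (G := G)
  have hL2n := chiL2_normal (G := G)
  have : (chiL1 G ⊔ chiL2 G).Normal := Subgroup.sup_normal _ _
  exact Subgroup.sup_normal _ _

lemma commutator_le_N : commutator (Chi G) ≤ chiD G ⊔ (chiL1 G ⊔ chiL2 G) := by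
  have hNn : (chiD G ⊔ (chiL1 G ⊔ chiL2 G)).Normal := N_normal
  set N := chiD G ⊔ (chiL1 G ⊔ chiL2 G) with hN
  let π := QuotientGroup.mk' N
  have toQ : ∀ x y : Chi G, ⁅x, y⁆ ∈ N → Commute (π x) (π y) := by
    intro x y hxy
    have h1 : π ⁅x, y⁆ = 1 := by
      rw [QuotientGroup.mk'_apply, QuotientGroup.eq_one_iff]; exact hxy
    rw [map_commutatorElement] at h1
    exact commutatorElement_eq_one_iff_commute.mp h1
  have hgen : Subgroup.closure ((Set.range fun g : G => π (chiIota1 G g)) ∪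
      (Set.range fun g : G => π (chiIota2 G g))) = ⊤ := by
    rw [Subgroup.closure_union]
    have r1 : (Set.range fun g : G => π (chiIota1 G g)) = Set.range (π.comp (chiIota1 G)) := rfl
    have r2 : (Set.range fun g : G => π (chiIota2 G g)) = Set.range (π.comp (chiIota2 G)) := rfl
    rw [r1, r2, ← MonoidHom.coe_range, ← MonoidHom.coe_range, Subgroup.closure_eq,
      Subgroup.closure_eq, MonoidHom.range_comp, MonoidHom.range_comp, ← Subgroup.map_sup]
    show Subgroup.map π (chiG1 G ⊔ chiG2 G) = ⊤
    rw [g1_sup_g2, Subgroup.map_top_of_surjective _ (QuotientGroup.mk'_surjective _)]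
  have hT : ∀ a ∈ (Set.range fun g : G => π (chiIota1 G g)) ∪
      (Set.range fun g : G => π (chiIota2 G g)),
      ∀ b ∈ (Set.range fun g : G => π (chiIota1 G g)) ∪
      (Set.range fun g : G => π (chiIota2 G g)), Commute a b := by
    rintro a (⟨g, rfl⟩ | ⟨g, rfl⟩) b (⟨h, rfl⟩ | ⟨h, rfl⟩)
    · exact toQ _ _ (mem_N_ii_ii g h)
    · exact toQ _ _ (mem_N_ii_jj g h)
    · exact toQ _ _ (mem_N_jj_ii g h)
    · exact toQ _ _ (mem_N_jj_jj g h)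
  have hc := commute_all_of_closure_eq_top hgen hT
  rw [commutator_def, Subgroup.commutator_le]
  intro p _ q _
  have h1 : π ⁅p, q⁆ = 1 := by
    rw [map_commutatorElement]
    exact commutatorElement_eq_one_iff_commute.mpr (hc (π p) (π q))
  rw [QuotientGroup.mk'_apply, QuotientGroup.eq_one_iff] at h1
  exact h1

lemma N_le_commutator : chiD G ⊔ (chiL1 G ⊔ chiL2 G) ≤ commutator (Chi G) := by
  rw [commutator_def]
  refine sup_le ?_ (sup_le ?_ ?_)
  · exact Subgroup.commutator_mono (le_top (a := chiG1 G)) (le_top (a := chiG2 G))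
  · exact Subgroup.commutator_mono (le_top (a := chiL G)) (le_top (a := chiG1 G))
  · exact Subgroup.commutator_mono (le_top (a := chiL G)) (le_top (a := chiG2 G))

lemma part1 : commutator (Chi G) = chiD G ⊔ (chiL1 G ⊔ chiL2 G) :=
  le_antisymm commutator_le_N N_le_commutator

lemma part2 : ⁅chiD G, chiL1 G ⊔ chiL2 G⁆ = ⊥ := by
  have hsub : chiL1 G ⊔ chiL2 G ≤ chiL G := sup_le chiL1_le_chiL chiL2_le_chiL
  have h0 : ⁅chiD G, chiL G⁆ = ⊥ :=
    Subgroup.commutator_eq_bot_iff_le_centralizer.mpr chiD_le_centralizer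
  exact le_bot_iff.mp ((Subgroup.commutator_mono le_rfl hsub).trans h0.le)

lemma part3 : ∀ x ∈ chiD G ⊓ (chiL1 G ⊔ chiL2 G), ∀ y ∈ commutator (Chi G),
    x * y = y * x := by
  intro x hx y hy
  obtain ⟨hx1, hx2⟩ := hx
  have hsub : chiL1 G ⊔ chiL2 G ≤ chiL G := sup_le chiL1_le_chiL chiL2_le_chiL
  have hxL : x ∈ chiL G := hsub hx2
  rw [part1] at hy
  have hcent : chiD G ⊔ (chiL1 G ⊔ chiL2 G) ≤ Subgroup.centralizer {x} := by
    apply sup_le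
    · intro d hd
      rw [Subgroup.mem_centralizer_iff]
      intro z hz
      rw [Set.mem_singleton_iff] at hz
      rw [hz]
      exact ((allCommuteDL d hd x hxL).symm).eq
    · intro k hk
      rw [Subgroup.mem_centralizer_iff]
      intro z hz
      rw [Set.mem_singleton_iff] at hz
      rw [hz]
      exact (allCommuteDL x hx1 k (hsub hk)).eq
  exact Subgroup.mem_centralizer_iff.mp (hcent hy) x rfl

end ChiProof

theorem chi_derived_central_product (G : Type*) [Group G] :
    commutator (Chi G) = chiD G ⊔ (chiL1 G ⊔ chiL2 G) ∧
    ⁅chiD G, chiL1 G ⊔ chiL2 G⁆ = ⊥ ∧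
    ∀ x ∈ chiD G ⊓ (chiL1 G ⊔ chiL2 G), ∀ y ∈ commutator (Chi G), x * y = y * x :=
  ⟨ChiProof.part1, ChiProof.part2, ChiProof.part3⟩
end

section
/- The second derived subgroup of the weak commutativity group χ(G) satisfies χ(G)^(2) = D' ⊔ L₁' ⊔ L₂' ⊔ L₁₂, the join of the derived subgroups of D, L₁, L₂ together with L₁₂. -/
open Subgroup
open scoped commutatorElement

section CjPc

variable {X : Type*} [Group X]

/-- paper-style commutator `x⁻¹y⁻¹xy`. -/
private def pcm (x y : X) : X := x⁻¹ * y⁻¹ * x * y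

/-- paper-style conjugation `u⁻¹xu`. -/
private def cjj (x u : X) : X := u⁻¹ * x * u

private lemma cjj_cjj (x u v : X) : cjj (cjj x u) v = cjj x (u * v) := by
  simp only [cjj]; group

private lemma cjj_mul (x y u : X) : cjj (x * y) u = cjj x u * cjj y u := by
  simp only [cjj]; group

private lemma cjj_inv (x u : X) : cjj x⁻¹ u = (cjj x u)⁻¹ := by
  simp only [cjj]; group

private lemma cjj_one (u : X) : cjj 1 u = 1 := by simp [cjj]

private lemma cjj_one_right (x : X) : cjj x 1 = x := by simp [cjj]

private lemma pcm_inv (x y : X) : (pcm x y)⁻¹ = pcm y x := by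
  simp only [pcm]; group

private lemma pcm_right (x y z : X) : pcm x (y * z) = pcm x z * cjj (pcm x y) z := by
  simp only [pcm, cjj]; group

private lemma pcm_left (x y z : X) : pcm (x * y) z = cjj (pcm x z) y * pcm y z := by
  simp only [pcm, cjj]; group

private lemma pcm_eq_one {x y : X} (h : Commute x y) : pcm x y = 1 := by
  simp only [pcm]
  rw [mul_assoc x⁻¹ y⁻¹ x, (h.inv_right.eq.symm : y⁻¹ * x = x * y⁻¹)]
  group

private lemma commute_of_cjj {x u : X} (h : cjj x u = x) : Commute x u := by
  have h2 := congrArg (fun z => u * z) h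
  simp only [cjj] at h2
  rw [show u * (u⁻¹ * x * u) = x * u by group] at h2
  exact h2

private lemma cjj_of_commute {x u : X} (h : Commute x u) : cjj x u = x := by
  simp only [cjj]
  rw [mul_assoc, h.eq]
  group

private lemma cjj_fix_inv {x w : X} (h : cjj x w⁻¹ = x) : cjj x w = x := by
  have c : Commute x w := by simpa using (commute_of_cjj h).inv_right
  exact cjj_of_commute c

private lemma cjj_fix_inv' {x w : X} (h : cjj x w = x) : cjj x w⁻¹ = x :=
  cjj_of_commute (commute_of_cjj h).inv_right

end CjPc

section KeyChain

variable {G H : Type*} [Group G] [Group H]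

private def lamf (i j : G →* H) (a : G) : H := (i a)⁻¹ * j a

variable (i j : G →* H)

private lemma lamf_swap (a : G) : lamf j i a = (lamf i j a)⁻¹ := by
  simp [lamf]

variable (h : ∀ x : G, Commute (i x) (j x))

include h in
private lemma lam_eq' (a : G) : lamf i j a = j a * (i a)⁻¹ :=
  ((h a).symm.inv_right).eq.symm

include h in
private lemma lam_comm_j (a : G) : Commute (lamf i j a) (j a) :=
  Commute.mul_left (h a).inv_left (Commute.refl (j a))

include h in
private lemma S1 (a b : G) :
    cjj (pcm (i a) (j b)) (lamf i j a) = pcm (j a) (i b) := by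
  have h0 : pcm (i (b * a)) (j (b * a)) = 1 := pcm_eq_one (h _)
  simp only [map_mul, pcm_left, pcm_right, pcm_eq_one (h a), pcm_eq_one (h b), cjj_one,
    mul_one, one_mul] at h0
  have hBA : (cjj (pcm (i b) (j a)) (i a))⁻¹ = cjj (pcm (i a) (j b)) (j a) :=
    inv_eq_of_mul_eq_one_right h0
  rw [lam_eq' i j h, ← cjj_cjj, ← hBA, ← cjj_inv, pcm_inv, cjj_cjj, mul_inv_cancel,
    cjj_one_right]

include h in
private lemma S2 (a b c : G) :
    cjj (pcm (i a) (j b)) (j c * lamf i j a) = cjj (pcm (i a) (j b)) (lamf i j a * i c) := by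
  have h1 := S1 i j h a (b * c)
  simp only [map_mul, pcm_right, cjj_mul, cjj_cjj] at h1
  rw [S1 i j h a c, ← S1 i j h a b, cjj_cjj] at h1
  exact mul_left_cancel h1

include h in
private lemma S3 (a b : G) :
    cjj (pcm (i a) (j b)) (lamf i j a) = pcm (i a) (j b) := by
  have h2 := S2 i j h a b a
  rw [((lam_comm_j i j h a).symm.eq : j a * lamf i j a = lamf i j a * j a), ← cjj_cjj,
    ← cjj_cjj] at h2
  -- h2 : cjj (cjj X lam) (j a) = cjj (cjj X lam) (i a)
  have hgen : ∀ Y : H, cjj Y (j a) = cjj Y (i a) → cjj Y (lamf i j a) = Y := by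
    intro Y h2'
    rw [lam_eq' i j h, ← cjj_cjj, h2', cjj_cjj, mul_inv_cancel, cjj_one_right]
  have h3 := hgen _ h2
  have h5 := cjj_fix_inv' h3
  rw [cjj_cjj, mul_inv_cancel, cjj_one_right] at h5
  exact h5.symm

include h in
private lemma S4 (a b : G) : pcm (j a) (i b) = pcm (i a) (j b) := by
  rw [← S1 i j h a b, S3 i j h a b]

include h in
private lemma S5' (a b c : G) :
    cjj (pcm (i a) (j b)) (j c * lamf i j a * (j c)⁻¹) = pcm (i a) (j b) := by
  have h1 := S3 i j h a (b * c)
  simp only [map_mul, pcm_right, cjj_mul, cjj_cjj] at h1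
  rw [S3 i j h a c] at h1
  have h2 := mul_left_cancel h1
  -- h2 : cjj (pcm (i a) (j b)) (j c * lamf i j a) = cjj (pcm (i a) (j b)) (j c)
  have h3 := congrArg (fun z => cjj z (j c)⁻¹) h2
  simp only [cjj_cjj] at h3
  rw [mul_inv_cancel, cjj_one_right] at h3
  exact h3

include h in
private lemma S6' (a b c : G) :
    cjj (pcm (i a) (j b)) (i c * lamf i j a * (i c)⁻¹) = pcm (i a) (j b) := by
  have hs := S5' j i (fun x => (h x).symm) a b c
  rw [lamf_swap, S4 i j h a b] at hs
  rw [show i c * (lamf i j a)⁻¹ * (i c)⁻¹ = (i c * lamf i j a * (i c)⁻¹)⁻¹ by group] at hs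
  exact cjj_fix_inv hs

include h in
private lemma S7 (a b c : G) :
    cjj (pcm (i a) (j b)) (j c * lamf i j a * (i c)⁻¹) = pcm (i a) (j b) := by
  have h2 := S2 i j h a b c
  conv at h2 => rhs; rw [← cjj_cjj, S3 i j h a b]
  -- h2 : cjj X (j c * lamf) = cjj X (i c)
  have h3 := congrArg (fun z => cjj z (i c)⁻¹) h2
  simp only [cjj_cjj] at h3
  rw [mul_inv_cancel, cjj_one_right] at h3
  exact h3

include h in
private lemma S8 (a b c : G) :
    cjj (pcm (i a) (j b)) (j c * (i c)⁻¹) = pcm (i a) (j b) := by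
  have h7 := S7 i j h a b c
  have h6 := S6' i j h a b c
  have h6i := cjj_fix_inv' h6
  have h9 := congrArg (fun z => cjj z (i c * lamf i j a * (i c)⁻¹)⁻¹) h7
  simp only [cjj_cjj] at h9
  rw [show j c * lamf i j a * (i c)⁻¹ * (i c * lamf i j a * (i c)⁻¹)⁻¹ = j c * (i c)⁻¹
    by group, h6i] at h9
  exact h9

include h in
private lemma S9 (a b c : G) :
    Commute (pcm (i a) (j b)) (lamf i j c) := by
  have h8 := S8 i j h a b c⁻¹
  simp only [map_inv, inv_inv] at h8
  rw [show (j c)⁻¹ * i c = (lamf i j c)⁻¹ by simp [lamf]] at h8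
  simpa using (commute_of_cjj h8).inv_right

include h in
private lemma keyCommute (a b c : G) :
    Commute ⁅i a, j b⁆ ((i c)⁻¹ * j c) := by
  have h9 := S9 i j h a⁻¹ b⁻¹ c
  simp only [pcm, lamf, map_inv, inv_inv] at h9
  simpa [commutatorElement_def] using h9

end KeyChain

section ClosureHelpers

variable {X : Type*} [Group X]

private lemma commute_closure {s t : Set X} (h : ∀ x ∈ s, ∀ y ∈ t, Commute x y) :
    ∀ x ∈ Subgroup.closure s, ∀ y ∈ Subgroup.closure t, Commute x y := by
  have inner : ∀ x ∈ s, ∀ y ∈ Subgroup.closure t, Commute x y := by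
    intro x hx y hy
    induction hy using Subgroup.closure_induction with
    | mem z hz => exact h x hx z hz
    | one => exact Commute.one_right x
    | mul u v hu hv pu pv => exact pu.mul_right pv
    | inv u hu pu => exact pu.inv_right
  intro x hx y hy
  induction hx using Subgroup.closure_induction with
  | mem z hz => exact inner z hz y hy
  | one => exact Commute.one_left y
  | mul u v hu hv pu pv => exact pu.mul_left pv
  | inv u hu pu => exact pu.inv_left

private lemma conj_mem_closure_of_gen {s : Set X} {u : X}
    (hu : ∀ x ∈ s, u * x * u⁻¹ ∈ Subgroup.closure s) :
    ∀ {n : X}, n ∈ Subgroup.closure s → u * n * u⁻¹ ∈ Subgroup.closure s := by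
  intro n hn
  induction hn using Subgroup.closure_induction with
  | mem x hx => exact hu x hx
  | one => simpa using Subgroup.one_mem _
  | mul x y hx hy px py =>
      rw [show u * (x * y) * u⁻¹ = (u * x * u⁻¹) * (u * y * u⁻¹) by group]
      exact mul_mem px py
  | inv x hx px =>
      rw [show u * x⁻¹ * u⁻¹ = (u * x * u⁻¹)⁻¹ by group]
      exact inv_mem px

private lemma normal_of_sup_conj {A B N : Subgroup X} (hsup : A ⊔ B = ⊤)
    (hA : ∀ a ∈ A, ∀ n ∈ N, a * n * a⁻¹ ∈ N)
    (hB : ∀ b ∈ B, ∀ n ∈ N, b * n * b⁻¹ ∈ N) : N.Normal := by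
  rw [← Subgroup.normalizer_eq_top_iff]
  rw [eq_top_iff, ← hsup]
  have step : ∀ (C : Subgroup X), (∀ c ∈ C, ∀ n ∈ N, c * n * c⁻¹ ∈ N) →
      C ≤ Subgroup.normalizer (N : Set X) := by
    intro C hC c hc
    rw [Subgroup.mem_normalizer_iff]
    intro x
    constructor
    · intro hx; exact hC c hc x hx
    · intro hx
      have := hC c⁻¹ (inv_mem hc) _ hx
      rwa [show c⁻¹ * (c * x * c⁻¹) * c⁻¹⁻¹ = x by group] at this
  exact sup_le (step A hA) (step B hB)

private lemma comm_sup3_le {A B C M : Subgroup X} [M.Normal]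
    (hAA : ⁅A, A⁆ ≤ M) (hBB : ⁅B, B⁆ ≤ M) (hCC : ⁅C, C⁆ ≤ M)
    (hAB : ⁅A, B⁆ ≤ M) (hAC : ⁅A, C⁆ ≤ M) (hBC : ⁅B, C⁆ ≤ M) :
    ⁅A ⊔ B ⊔ C, A ⊔ B ⊔ C⁆ ≤ M := by
  rw [Subgroup.commutator_le]
  intro x hx y hy
  set π := QuotientGroup.mk' M with hπ
  refine (QuotientGroup.eq_one_iff _).mp ?_
  have hmapc : ((⁅x, y⁆ : X) : X ⧸ M) = ⁅π x, π y⁆ := map_commutatorElement π x y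
  rw [hmapc, commutatorElement_eq_one_iff_commute]
  have key2 : ∀ (P Q : Subgroup X), ⁅P, Q⁆ ≤ M →
      ∀ u ∈ P.map π, ∀ v ∈ Q.map π, Commute u v := by
    intro P Q hPQ u hu v hv
    obtain ⟨p, hp, rfl⟩ := hu
    obtain ⟨q, hq, rfl⟩ := hv
    rw [← commutatorElement_eq_one_iff_commute, ← map_commutatorElement]
    exact (QuotientGroup.eq_one_iff _).mpr (hPQ (Subgroup.commutator_mem_commutator hp hq))
  have hpair : ∀ u ∈ ((A.map π : Set (X ⧸ M)) ∪ (B.map π : Set (X ⧸ M)) ∪ (C.map π : Set (X ⧸ M))),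
      ∀ v ∈ ((A.map π : Set (X ⧸ M)) ∪ (B.map π : Set (X ⧸ M)) ∪ (C.map π : Set (X ⧸ M))),
      Commute u v := by
    rintro u ((hu | hu) | hu) v ((hv | hv) | hv)
    · exact key2 A A hAA u hu v hv
    · exact key2 A B hAB u hu v hv
    · exact key2 A C hAC u hu v hv
    · exact (key2 A B hAB v hv u hu).symm
    · exact key2 B B hBB u hu v hv
    · exact key2 B C hBC u hu v hv
    · exact (key2 A C hAC v hv u hu).symm
    · exact (key2 B C hBC v hv u hu).symm
    · exact key2 C C hCC u hu v hv
  have hmem : ∀ z ∈ A ⊔ B ⊔ C, π z ∈ Subgroup.closure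
      ((A.map π : Set (X ⧸ M)) ∪ (B.map π : Set (X ⧸ M)) ∪ (C.map π : Set (X ⧸ M))) := by
    intro z hz
    have h1 : π z ∈ (A ⊔ B ⊔ C).map π := Subgroup.mem_map_of_mem π hz
    rw [Subgroup.map_sup, Subgroup.map_sup] at h1
    rw [Subgroup.closure_union, Subgroup.closure_union, Subgroup.closure_eq,
      Subgroup.closure_eq, Subgroup.closure_eq]
    exact h1
  exact commute_closure hpair _ (hmem x hx) _ (hmem y hy)

end ClosureHelpers
section ChiFacts

variable (G : Type*) [Group G]

private lemma hcomm : ∀ g : G, Commute (chiIota1 G g) (chiIota2 G g) := by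
  intro g
  rw [← commutatorElement_eq_one_iff_commute]
  have h1 : ⁅chiIota1 G g, chiIota2 G g⁆
      = (QuotientGroup.mk' (chiRel G)) ⁅Monoid.Coprod.inl g, Monoid.Coprod.inr g⁆ :=
    (map_commutatorElement (QuotientGroup.mk' (chiRel G)) _ _).symm
  rw [h1, QuotientGroup.mk'_apply]
  exact (QuotientGroup.eq_one_iff _).mpr
    (Subgroup.subset_normalClosure ⟨g, commutatorElement_def _ _⟩)

private lemma htop : chiG1 G ⊔ chiG2 G = ⊤ := by
  show ((QuotientGroup.mk' (chiRel G)).comp (Monoid.Coprod.inl (M := G) (N := G))).range ⊔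
    ((QuotientGroup.mk' (chiRel G)).comp (Monoid.Coprod.inr (M := G) (N := G))).range =
    (⊤ : Subgroup (Monoid.Coprod G G ⧸ chiRel G))
  rw [← MonoidHom.map_range, ← MonoidHom.map_range,
    ← Subgroup.map_sup, Monoid.Coprod.range_inl_sup_range_inr]
  rw [← MonoidHom.range_eq_map]
  exact MonoidHom.range_eq_top_of_surjective _ (QuotientGroup.mk'_surjective _)

private lemma memG1 (a : G) : chiIota1 G a ∈ chiG1 G := MonoidHom.mem_range.mpr ⟨a, rfl⟩

private lemma memG2 (a : G) : chiIota2 G a ∈ chiG2 G := MonoidHom.mem_range.mpr ⟨a, rfl⟩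

private lemma lam_mem (g : G) : (chiIota1 G g)⁻¹ * chiIota2 G g ∈ chiL G :=
  Subgroup.subset_closure ⟨g, rfl⟩

end ChiFacts

section ChiNormality

variable (G : Type*) [Group G]

private lemma chiL_normal : (chiL G).Normal := by
  apply normal_of_sup_conj (htop G)
  · intro a ha n hn
    obtain ⟨hh, rfl⟩ := MonoidHom.mem_range.mp ha
    refine conj_mem_closure_of_gen ?_ hn
    rintro x ⟨g, rfl⟩
    have e : chiIota1 G hh * ((chiIota1 G g)⁻¹ * chiIota2 G g) * (chiIota1 G hh)⁻¹
        = ((chiIota1 G (g * hh⁻¹))⁻¹ * chiIota2 G (g * hh⁻¹))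
          * ((chiIota1 G hh⁻¹)⁻¹ * chiIota2 G hh⁻¹)⁻¹ := by
      simp only [map_mul, map_inv]; group
    rw [e]
    exact mul_mem (Subgroup.subset_closure ⟨_, rfl⟩) (inv_mem (Subgroup.subset_closure ⟨_, rfl⟩))
  · intro b hb n hn
    obtain ⟨hh, rfl⟩ := MonoidHom.mem_range.mp hb
    refine conj_mem_closure_of_gen ?_ hn
    rintro x ⟨g, rfl⟩
    have e : chiIota2 G hh * ((chiIota1 G g)⁻¹ * chiIota2 G g) * (chiIota2 G hh)⁻¹
        = ((chiIota1 G hh⁻¹)⁻¹ * chiIota2 G hh⁻¹)⁻¹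
          * ((chiIota1 G (g * hh⁻¹))⁻¹ * chiIota2 G (g * hh⁻¹)) := by
      simp only [map_mul, map_inv]; group
    rw [e]
    exact mul_mem (inv_mem (Subgroup.subset_closure ⟨_, rfl⟩)) (Subgroup.subset_closure ⟨_, rfl⟩)

private lemma chiD_normal : (chiD G).Normal := by
  have hD : chiD G
      = Subgroup.closure {g | ∃ g₁ ∈ chiG1 G, ∃ g₂ ∈ chiG2 G, ⁅g₁, g₂⁆ = g} :=
    Subgroup.commutator_def _ _
  apply normal_of_sup_conj (htop G)
  · intro a ha n hn
    obtain ⟨hh, rfl⟩ := MonoidHom.mem_range.mp ha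
    rw [hD] at hn ⊢
    refine conj_mem_closure_of_gen ?_ hn
    rintro x ⟨g₁, hg₁, g₂, hg₂, rfl⟩
    obtain ⟨a', rfl⟩ := MonoidHom.mem_range.mp hg₁
    obtain ⟨b', rfl⟩ := MonoidHom.mem_range.mp hg₂
    rw [← hD]
    have e : chiIota1 G hh * ⁅chiIota1 G a', chiIota2 G b'⁆ * (chiIota1 G hh)⁻¹
        = ⁅chiIota1 G (hh * a'), chiIota2 G b'⁆ * ⁅chiIota1 G hh, chiIota2 G b'⁆⁻¹ := by
      simp only [commutatorElement_def, map_mul]; group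
    rw [e]
    exact mul_mem (Subgroup.commutator_mem_commutator (memG1 G _) (memG2 G _))
      (inv_mem (Subgroup.commutator_mem_commutator (memG1 G _) (memG2 G _)))
  · intro b hb n hn
    obtain ⟨hh, rfl⟩ := MonoidHom.mem_range.mp hb
    rw [hD] at hn ⊢
    refine conj_mem_closure_of_gen ?_ hn
    rintro x ⟨g₁, hg₁, g₂, hg₂, rfl⟩
    obtain ⟨a', rfl⟩ := MonoidHom.mem_range.mp hg₁
    obtain ⟨b', rfl⟩ := MonoidHom.mem_range.mp hg₂
    rw [← hD]
    have e : chiIota2 G hh * ⁅chiIota1 G a', chiIota2 G b'⁆ * (chiIota2 G hh)⁻¹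
        = ⁅chiIota1 G a', chiIota2 G hh⁆⁻¹ * ⁅chiIota1 G a', chiIota2 G (hh * b')⁆ := by
      simp only [commutatorElement_def, map_mul]; group
    rw [e]
    exact mul_mem (inv_mem (Subgroup.commutator_mem_commutator (memG1 G _) (memG2 G _)))
      (Subgroup.commutator_mem_commutator (memG1 G _) (memG2 G _))

private lemma hDL : ∀ d ∈ chiD G, ∀ l ∈ chiL G, Commute d l := by
  have hD : chiD G
      = Subgroup.closure {g | ∃ g₁ ∈ chiG1 G, ∃ g₂ ∈ chiG2 G, ⁅g₁, g₂⁆ = g} :=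
    Subgroup.commutator_def _ _
  intro d hd l hl
  rw [hD] at hd
  have hl' : l ∈ Subgroup.closure {x | ∃ g : G, x = (chiIota1 G g)⁻¹ * chiIota2 G g} := hl
  refine commute_closure ?_ d hd l hl'
  rintro x ⟨g₁, hg₁, g₂, hg₂, rfl⟩ y ⟨c, rfl⟩
  obtain ⟨a, rfl⟩ := MonoidHom.mem_range.mp hg₁
  obtain ⟨b, rfl⟩ := MonoidHom.mem_range.mp hg₂
  exact keyCommute (chiIota1 G) (chiIota2 G) (hcomm G) a b c

private lemma chiL1_normal : (chiL1 G).Normal := by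
  have hLn := chiL_normal G
  have hL1 : chiL1 G
      = Subgroup.closure {g | ∃ g₁ ∈ chiL G, ∃ g₂ ∈ chiG1 G, ⁅g₁, g₂⁆ = g} :=
    Subgroup.commutator_def _ _
  apply normal_of_sup_conj (htop G)
  · intro a ha n hn
    obtain ⟨hh, rfl⟩ := MonoidHom.mem_range.mp ha
    rw [hL1] at hn ⊢
    refine conj_mem_closure_of_gen ?_ hn
    rintro x ⟨l, hl, p, hp, rfl⟩
    obtain ⟨g, rfl⟩ := MonoidHom.mem_range.mp hp
    rw [← hL1]
    have e : chiIota1 G hh * ⁅l, chiIota1 G g⁆ * (chiIota1 G hh)⁻¹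
        = ⁅chiIota1 G hh * l * (chiIota1 G hh)⁻¹, chiIota1 G (hh * g * hh⁻¹)⁆ := by
      simp only [commutatorElement_def, map_mul, map_inv]; group
    rw [e]
    exact Subgroup.commutator_mem_commutator (hLn.conj_mem l hl _) (memG1 G _)
  · intro b hb n hn
    obtain ⟨hh, rfl⟩ := MonoidHom.mem_range.mp hb
    rw [hL1] at hn ⊢
    refine conj_mem_closure_of_gen ?_ hn
    rintro x ⟨l, hl, p, hp, rfl⟩
    obtain ⟨g, rfl⟩ := MonoidHom.mem_range.mp hp
    rw [← hL1]
    have hl' : chiIota2 G hh * l * (chiIota2 G hh)⁻¹ ∈ chiL G := hLn.conj_mem l hl _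
    have hd : ⁅(chiIota1 G g)⁻¹, chiIota2 G hh⁆ ∈ chiD G :=
      Subgroup.commutator_mem_commutator (inv_mem (memG1 G g)) (memG2 G hh)
    have hce : ⁅chiIota2 G hh * l * (chiIota2 G hh)⁻¹,
        ⁅(chiIota1 G g)⁻¹, chiIota2 G hh⁆⁆ = 1 :=
      commutatorElement_eq_one_iff_commute.mpr ((hDL G _ hd _ hl').symm)
    have e : chiIota2 G hh * ⁅l, chiIota1 G g⁆ * (chiIota2 G hh)⁻¹
        = ⁅chiIota2 G hh * l * (chiIota2 G hh)⁻¹, chiIota1 G g⁆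
          * (chiIota1 G g * ⁅chiIota2 G hh * l * (chiIota2 G hh)⁻¹,
              ⁅(chiIota1 G g)⁻¹, chiIota2 G hh⁆⁆ * (chiIota1 G g)⁻¹) := by
      simp only [commutatorElement_def]; group
    rw [e, hce, mul_one, mul_inv_cancel, mul_one]
    exact Subgroup.commutator_mem_commutator hl' (memG1 G g)

private lemma chiL2_normal : (chiL2 G).Normal := by
  have hLn := chiL_normal G
  have hL2 : chiL2 G
      = Subgroup.closure {g | ∃ g₁ ∈ chiL G, ∃ g₂ ∈ chiG2 G, ⁅g₁, g₂⁆ = g} :=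
    Subgroup.commutator_def _ _
  apply normal_of_sup_conj (htop G)
  · intro a ha n hn
    obtain ⟨hh, rfl⟩ := MonoidHom.mem_range.mp ha
    rw [hL2] at hn ⊢
    refine conj_mem_closure_of_gen ?_ hn
    rintro x ⟨l, hl, p, hp, rfl⟩
    obtain ⟨g, rfl⟩ := MonoidHom.mem_range.mp hp
    rw [← hL2]
    have hl' : chiIota1 G hh * l * (chiIota1 G hh)⁻¹ ∈ chiL G := hLn.conj_mem l hl _
    have hd : ⁅(chiIota2 G g)⁻¹, chiIota1 G hh⁆ ∈ chiD G := by
      rw [← commutatorElement_inv]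
      exact inv_mem (Subgroup.commutator_mem_commutator (memG1 G hh) (inv_mem (memG2 G g)))
    have hce : ⁅chiIota1 G hh * l * (chiIota1 G hh)⁻¹,
        ⁅(chiIota2 G g)⁻¹, chiIota1 G hh⁆⁆ = 1 :=
      commutatorElement_eq_one_iff_commute.mpr ((hDL G _ hd _ hl').symm)
    have e : chiIota1 G hh * ⁅l, chiIota2 G g⁆ * (chiIota1 G hh)⁻¹
        = ⁅chiIota1 G hh * l * (chiIota1 G hh)⁻¹, chiIota2 G g⁆
          * (chiIota2 G g * ⁅chiIota1 G hh * l * (chiIota1 G hh)⁻¹,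
              ⁅(chiIota2 G g)⁻¹, chiIota1 G hh⁆⁆ * (chiIota2 G g)⁻¹) := by
      simp only [commutatorElement_def]; group
    rw [e, hce, mul_one, mul_inv_cancel, mul_one]
    exact Subgroup.commutator_mem_commutator hl' (memG2 G g)
  · intro b hb n hn
    obtain ⟨hh, rfl⟩ := MonoidHom.mem_range.mp hb
    rw [hL2] at hn ⊢
    refine conj_mem_closure_of_gen ?_ hn
    rintro x ⟨l, hl, p, hp, rfl⟩
    obtain ⟨g, rfl⟩ := MonoidHom.mem_range.mp hp
    rw [← hL2]
    have e : chiIota2 G hh * ⁅l, chiIota2 G g⁆ * (chiIota2 G hh)⁻¹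
        = ⁅chiIota2 G hh * l * (chiIota2 G hh)⁻¹, chiIota2 G (hh * g * hh⁻¹)⁆ := by
      simp only [commutatorElement_def, map_mul, map_inv]; group
    rw [e]
    exact Subgroup.commutator_mem_commutator (hLn.conj_mem l hl _) (memG2 G _)

end ChiNormality

section ChiFinal

variable (G : Type*) [Group G]

private lemma chi_der_le :
    ⁅(⊤ : Subgroup (Chi G)), (⊤ : Subgroup (Chi G))⁆ ≤ chiD G ⊔ chiL1 G ⊔ chiL2 G := by
  haveI := chiD_normal G
  haveI := chiL1_normal G
  haveI := chiL2_normal G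
  have hDleM : chiD G ≤ chiD G ⊔ chiL1 G ⊔ chiL2 G := le_sup_left.trans le_sup_left
  have hL1leM : chiL1 G ≤ chiD G ⊔ chiL1 G ⊔ chiL2 G := le_sup_right.trans le_sup_left
  have hL2leM : chiL2 G ≤ chiD G ⊔ chiL1 G ⊔ chiL2 G := le_sup_right
  have hAA : ⁅chiG1 G, chiG1 G⁆ ≤ chiD G ⊔ chiL1 G ⊔ chiL2 G := by
    rw [Subgroup.commutator_le]
    intro x hx y hy
    obtain ⟨a, rfl⟩ := MonoidHom.mem_range.mp hx
    obtain ⟨b, rfl⟩ := MonoidHom.mem_range.mp hy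
    have e : ⁅chiIota1 G a, chiIota1 G b⁆
        = ⁅chiIota1 G a, chiIota2 G b⁆
          * (chiIota2 G b * ⁅chiIota1 G a, (chiIota2 G b)⁻¹ * chiIota1 G b⁆
              * (chiIota2 G b)⁻¹) := by
      simp only [commutatorElement_def]; group
    rw [e]
    refine mul_mem (hDleM (Subgroup.commutator_mem_commutator (memG1 G a) (memG2 G b))) ?_
    have hw : (chiIota2 G b)⁻¹ * chiIota1 G b ∈ chiL G := by
      rw [show (chiIota2 G b)⁻¹ * chiIota1 G b
        = ((chiIota1 G b)⁻¹ * chiIota2 G b)⁻¹ by group]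
      exact inv_mem (lam_mem G b)
    have hmemL1 : ⁅chiIota1 G a, (chiIota2 G b)⁻¹ * chiIota1 G b⁆ ∈ chiL1 G := by
      have h1 : ⁅chiIota1 G a, (chiIota2 G b)⁻¹ * chiIota1 G b⁆ ∈ ⁅chiG1 G, chiL G⁆ :=
        Subgroup.commutator_mem_commutator (memG1 G a) hw
      rwa [Subgroup.commutator_comm] at h1
    exact hL1leM ((chiL1_normal G).conj_mem _ hmemL1 (chiIota2 G b))
  have hBB : ⁅chiG2 G, chiG2 G⁆ ≤ chiD G ⊔ chiL1 G ⊔ chiL2 G := by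
    rw [Subgroup.commutator_le]
    intro x hx y hy
    obtain ⟨a, rfl⟩ := MonoidHom.mem_range.mp hx
    obtain ⟨b, rfl⟩ := MonoidHom.mem_range.mp hy
    have e : ⁅chiIota2 G a, chiIota2 G b⁆
        = ⁅chiIota2 G a, chiIota1 G b⁆
          * (chiIota1 G b * ⁅chiIota2 G a, (chiIota1 G b)⁻¹ * chiIota2 G b⁆
              * (chiIota1 G b)⁻¹) := by
      simp only [commutatorElement_def]; group
    rw [e]
    have hd : ⁅chiIota2 G a, chiIota1 G b⁆ ∈ chiD G := by
      rw [← commutatorElement_inv]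
      exact inv_mem (Subgroup.commutator_mem_commutator (memG1 G b) (memG2 G a))
    refine mul_mem (hDleM hd) ?_
    have hmemL2 : ⁅chiIota2 G a, (chiIota1 G b)⁻¹ * chiIota2 G b⁆ ∈ chiL2 G := by
      have h1 : ⁅chiIota2 G a, (chiIota1 G b)⁻¹ * chiIota2 G b⁆ ∈ ⁅chiG2 G, chiL G⁆ :=
        Subgroup.commutator_mem_commutator (memG2 G a) (lam_mem G b)
      rwa [Subgroup.commutator_comm] at h1
    exact hL2leM ((chiL2_normal G).conj_mem _ hmemL2 (chiIota1 G b))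
  have hAB : ⁅chiG1 G, chiG2 G⁆ ≤ chiD G ⊔ chiL1 G ⊔ chiL2 G := hDleM
  have h3 := comm_sup3_le (A := chiG1 G) (B := chiG2 G) (C := (⊥ : Subgroup (Chi G)))
    (M := chiD G ⊔ chiL1 G ⊔ chiL2 G) hAA hBB
    (by rw [Subgroup.commutator_bot_left]; exact bot_le) hAB
    (by rw [Subgroup.commutator_bot_right]; exact bot_le)
    (by rw [Subgroup.commutator_bot_right]; exact bot_le)
  rwa [sup_bot_eq, htop G] at h3

end ChiFinal

theorem chi_second_derived (G : Type*) [Group G] :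
    derivedSeries (Chi G) 2 =
      ⁅chiD G, chiD G⁆ ⊔ ⁅chiL1 G, chiL1 G⁆ ⊔ ⁅chiL2 G, chiL2 G⁆ ⊔ chiL12 G := by
  haveI := chiD_normal G
  haveI := chiL1_normal G
  haveI := chiL2_normal G
  haveI := chiL_normal G
  haveI : (chiL12 G).Normal := inferInstanceAs (Subgroup.Normal ⁅chiL1 G, chiL2 G⁆)
  have hser : derivedSeries (Chi G) 2
      = ⁅(⁅(⊤ : Subgroup (Chi G)), (⊤ : Subgroup (Chi G))⁆ : Subgroup (Chi G)),
          (⁅(⊤ : Subgroup (Chi G)), (⊤ : Subgroup (Chi G))⁆ : Subgroup (Chi G))⁆ := rfl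
  have hstep1 := chi_der_le G
  apply le_antisymm
  · have hAA : ⁅chiD G, chiD G⁆
        ≤ ⁅chiD G, chiD G⁆ ⊔ ⁅chiL1 G, chiL1 G⁆ ⊔ ⁅chiL2 G, chiL2 G⁆ ⊔ chiL12 G :=
      ((le_sup_left.trans le_sup_left).trans le_sup_left)
    have hBB : ⁅chiL1 G, chiL1 G⁆
        ≤ ⁅chiD G, chiD G⁆ ⊔ ⁅chiL1 G, chiL1 G⁆ ⊔ ⁅chiL2 G, chiL2 G⁆ ⊔ chiL12 G :=
      ((le_sup_right.trans le_sup_left).trans le_sup_left)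
    have hCC : ⁅chiL2 G, chiL2 G⁆
        ≤ ⁅chiD G, chiD G⁆ ⊔ ⁅chiL1 G, chiL1 G⁆ ⊔ ⁅chiL2 G, chiL2 G⁆ ⊔ chiL12 G :=
      (le_sup_right.trans le_sup_left)
    have hDL1 : ⁅chiD G, chiL1 G⁆
        ≤ ⁅chiD G, chiD G⁆ ⊔ ⁅chiL1 G, chiL1 G⁆ ⊔ ⁅chiL2 G, chiL2 G⁆ ⊔ chiL12 G := by
      rw [Subgroup.commutator_le]
      intro d hd x hx
      have hxL : x ∈ chiL G := (Subgroup.commutator_le_left (chiL G) (chiG1 G)) hx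
      rw [commutatorElement_eq_one_iff_commute.mpr (hDL G d hd x hxL)]
      exact one_mem _
    have hDL2 : ⁅chiD G, chiL2 G⁆
        ≤ ⁅chiD G, chiD G⁆ ⊔ ⁅chiL1 G, chiL1 G⁆ ⊔ ⁅chiL2 G, chiL2 G⁆ ⊔ chiL12 G := by
      rw [Subgroup.commutator_le]
      intro d hd x hx
      have hxL : x ∈ chiL G := (Subgroup.commutator_le_left (chiL G) (chiG2 G)) hx
      rw [commutatorElement_eq_one_iff_commute.mpr (hDL G d hd x hxL)]
      exact one_mem _
    have hL1L2 : ⁅chiL1 G, chiL2 G⁆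
        ≤ ⁅chiD G, chiD G⁆ ⊔ ⁅chiL1 G, chiL1 G⁆ ⊔ ⁅chiL2 G, chiL2 G⁆ ⊔ chiL12 G :=
      le_sup_right
    have hfin := comm_sup3_le (A := chiD G) (B := chiL1 G) (C := chiL2 G)
      (M := ⁅chiD G, chiD G⁆ ⊔ ⁅chiL1 G, chiL1 G⁆ ⊔ ⁅chiL2 G, chiL2 G⁆ ⊔ chiL12 G)
      hAA hBB hCC hDL1 hDL2 hL1L2
    rw [hser]
    exact (Subgroup.commutator_mono hstep1 hstep1).trans hfin
  · rw [hser]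
    have hDleC : chiD G ≤ ⁅(⊤ : Subgroup (Chi G)), (⊤ : Subgroup (Chi G))⁆ :=
      Subgroup.commutator_mono le_top le_top
    have hL1leC : chiL1 G ≤ ⁅(⊤ : Subgroup (Chi G)), (⊤ : Subgroup (Chi G))⁆ :=
      Subgroup.commutator_mono le_top le_top
    have hL2leC : chiL2 G ≤ ⁅(⊤ : Subgroup (Chi G)), (⊤ : Subgroup (Chi G))⁆ :=
      Subgroup.commutator_mono le_top le_top
    refine sup_le (sup_le (sup_le ?_ ?_) ?_) ?_
    · exact Subgroup.commutator_mono hDleC hDleC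
    · exact Subgroup.commutator_mono hL1leC hL1leC
    · exact Subgroup.commutator_mono hL2leC hL2leC
    · exact Subgroup.commutator_mono hL1leC hL2leC
end

section
/- For every k ≥ 2, the (k+1)-st derived subgroup of the weak commutativity group χ(G) is the central product of the k-th derived subgroups of D, L₁ and L₂: χ(G)^(k+1) = D^(k) ⊔ L₁^(k) ⊔ L₂^(k), the commutator subgroups ⁅D^(k), L₁^(k)⁆, ⁅D^(k), L₂^(k)⁆, ⁅L₁^(k), L₂^(k)⁆ are all trivial, and the intersection of each factor with the join of the other two is contained in the centralizer of χ(G)^(k+1). -/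
open Subgroup
open scoped commutatorElement

/-- The derived series of a subgroup, as subgroups of the ambient group. -/
def derivedSub {H : Type*} [Group H] (K : Subgroup H) : ℕ → Subgroup H
  | 0 => K
  | n + 1 => ⁅derivedSub K n, derivedSub K n⁆

namespace ChiAux

variable {G : Type*} [Group G]

/-- `g ↦ g` in `χ(G)`. -/
def ia (g : G) : Chi G := chiIota1 G g
/-- `g ↦ g^φ` in `χ(G)`. -/
def ib (g : G) : Chi G := chiIota2 G g
/-- `l g = g⁻¹ g^φ`. -/
def el (g : G) : Chi G := (ia g)⁻¹ * ib g

lemma ia_mul (g h : G) : ia (g * h) = ia g * ia h := map_mul _ _ _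
lemma ib_mul (g h : G) : ib (g * h) = ib g * ib h := map_mul _ _ _
lemma ia_inv (g : G) : ia g⁻¹ = (ia g)⁻¹ := map_inv _ _
lemma ib_inv (g : G) : ib g⁻¹ = (ib g)⁻¹ := map_inv _ _
lemma ia_one : ia (1 : G) = 1 := map_one _
lemma ib_one : ib (1 : G) = 1 := map_one _

lemma comm_ab (g : G) : Commute (ia g) (ib g) := by
  have hx : (Monoid.Coprod.inl g * Monoid.Coprod.inr g *
      (Monoid.Coprod.inl g)⁻¹ * (Monoid.Coprod.inr g)⁻¹ : Monoid.Coprod G G) ∈ chiRel G :=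
    Subgroup.subset_normalClosure ⟨g, rfl⟩
  have h1 : ia g * ib g * (ia g)⁻¹ * (ib g)⁻¹ = 1 := by
    have := (QuotientGroup.eq_one_iff (N := chiRel G) _).mpr hx
    exact this
  exact commutatorElement_eq_one_iff_commute.mp h1

lemma el_one : el (1 : G) = 1 := by simp [el, ia_one, ib_one]

lemma el_inv (g : G) : el g⁻¹ = (el g)⁻¹ := by
  have h := comm_ab g
  rw [el, el, ia_inv, ib_inv, mul_inv_rev, inv_inv]
  exact h.inv_right.eq

end ChiAux

namespace ChiAux

variable {G : Type*} [Group G]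

lemma ca (v u : G) : ia v * el u * (ia v)⁻¹ = el (u * v⁻¹) * el v := by
  have h : ib v * (ia v)⁻¹ = (ia v)⁻¹ * ib v := ((comm_ab v).symm.inv_right).eq
  simp only [el, ia_mul, ib_mul, ia_inv, ib_inv]
  calc ia v * ((ia u)⁻¹ * ib u) * (ia v)⁻¹
      = (ia u * (ia v)⁻¹)⁻¹ * (ib u * (ib v)⁻¹) * (ib v * (ia v)⁻¹) := by group
    _ = (ia u * (ia v)⁻¹)⁻¹ * (ib u * (ib v)⁻¹) * ((ia v)⁻¹ * ib v) := by rw [h]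

lemma ca' (v u : G) : (ia v)⁻¹ * el u * ia v = el (u * v) * (el v)⁻¹ := by
  simp only [el, ia_mul, ib_mul]
  group

lemma cb (v u : G) : ib v * el u * (ib v)⁻¹ = el v * el (u * v⁻¹) := by
  have h : ia v * ib v = ib v * ia v := (comm_ab v).eq
  simp only [el, ia_mul, ib_mul, ia_inv, ib_inv]
  calc ib v * ((ia u)⁻¹ * ib u) * (ib v)⁻¹
      = (ia v)⁻¹ * (ia v * ib v) * (ia u)⁻¹ * ib u * (ib v)⁻¹ := by group
    _ = (ia v)⁻¹ * (ib v * ia v) * (ia u)⁻¹ * ib u * (ib v)⁻¹ := by rw [h]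
    _ = (ia v)⁻¹ * ib v * ((ia u * (ia v)⁻¹)⁻¹ * (ib u * (ib v)⁻¹)) := by group

lemma cb' (v u : G) : (ib v)⁻¹ * el u * ib v = (el v)⁻¹ * el (u * v) := by
  simp only [el, ia_mul, ib_mul]
  group

lemma Sid (u v : G) : el (u * v⁻¹ * u) = el u * (el v)⁻¹ * el u := by
  have h : Commute (ia v * (ia u)⁻¹) (ib u * (ib v)⁻¹) := by
    have h0 := comm_ab (v * u⁻¹)
    rw [ia_mul, ib_mul, ia_inv, ib_inv] at h0
    simpa [mul_inv_rev] using h0.inv_right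
  simp only [el, ia_mul, ib_mul, ia_inv, ib_inv]
  calc (ia u * (ia v)⁻¹ * ia u)⁻¹ * (ib u * (ib v)⁻¹ * ib u)
      = (ia u)⁻¹ * ((ia v * (ia u)⁻¹) * (ib u * (ib v)⁻¹)) * ib u := by group
    _ = (ia u)⁻¹ * ((ib u * (ib v)⁻¹) * (ia v * (ia u)⁻¹)) * ib u := by rw [h.eq]
    _ = (ia u)⁻¹ * ib u * ((ib v)⁻¹ * ia v) * ((ia u)⁻¹ * ib u) := by group
    _ = (ia u)⁻¹ * ib u * ((ia v)⁻¹ * ib v)⁻¹ * ((ia u)⁻¹ * ib u) := by group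

lemma Spos (p q : G) : el p * el q * el p = el (p * q * p) := by
  have h := Sid p q⁻¹
  simp only [el_inv, inv_inv] at h
  exact h.symm

lemma Sneg (p q : G) : (el p)⁻¹ * el q * (el p)⁻¹ = el (p⁻¹ * q * p⁻¹) := by
  have h := Sid p⁻¹ q⁻¹
  simp only [el_inv, inv_inv] at h
  exact h.symm

lemma el_sq (p : G) : el (p * p) = el p * el p := by
  have h := Spos p 1
  rw [el_one, mul_one, mul_one] at h
  exact h.symm

end ChiAux

namespace ChiAux

variable {G : Type*} [Group G]

lemma ca'' (v u : G) : (ia v)⁻¹ * (el u)⁻¹ * ia v = el v * (el (u * v))⁻¹ := by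
  calc (ia v)⁻¹ * (el u)⁻¹ * ia v = ((ia v)⁻¹ * el u * ia v)⁻¹ := by group
    _ = (el (u * v) * (el v)⁻¹)⁻¹ := by rw [ca']
    _ = el v * (el (u * v))⁻¹ := by group

/-- The key computation: `[g, h^φ]` (old convention) centralizes `l x`. -/
lemma key (g h x : G) :
    ((ia g)⁻¹ * (ib h)⁻¹ * ia g * ib h) * el x * ((ia g)⁻¹ * (ib h)⁻¹ * ia g * ib h)⁻¹
      = el x := by
  have e1 : ib h * el x * (ib h)⁻¹ = el h * el (x * h⁻¹) := cb h x
  have e2 : ia g * (el h * el (x * h⁻¹)) * (ia g)⁻¹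
      = el (h * g⁻¹) * el g * (el (x * h⁻¹ * g⁻¹) * el g) := by
    rw [show ia g * (el h * el (x * h⁻¹)) * (ia g)⁻¹
        = (ia g * el h * (ia g)⁻¹) * (ia g * el (x * h⁻¹) * (ia g)⁻¹) from by group]
    simp only [ca]
  have e3 : (ib h)⁻¹ * (el (h * g⁻¹) * el g * (el (x * h⁻¹ * g⁻¹) * el g)) * ib h
      = ((el h)⁻¹ * el (h * g⁻¹ * h)) * ((el h)⁻¹ * el (g * h)) *
        (((el h)⁻¹ * el (x * h⁻¹ * g⁻¹ * h)) * ((el h)⁻¹ * el (g * h))) := by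
    rw [show (ib h)⁻¹ * (el (h * g⁻¹) * el g * (el (x * h⁻¹ * g⁻¹) * el g)) * ib h
        = ((ib h)⁻¹ * el (h * g⁻¹) * ib h) * ((ib h)⁻¹ * el g * ib h) *
          (((ib h)⁻¹ * el (x * h⁻¹ * g⁻¹) * ib h) * ((ib h)⁻¹ * el g * ib h)) from by group]
    simp only [cb']
  have e4 : (ia g)⁻¹ * (((el h)⁻¹ * el (h * g⁻¹ * h)) * ((el h)⁻¹ * el (g * h)) *
        (((el h)⁻¹ * el (x * h⁻¹ * g⁻¹ * h)) * ((el h)⁻¹ * el (g * h)))) * ia g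
      = (el g * (el (h * g))⁻¹) * (el (h * g⁻¹ * h * g) * (el g)⁻¹) *
        ((el g * (el (h * g))⁻¹) * (el (g * h * g) * (el g)⁻¹)) *
        (((el g * (el (h * g))⁻¹) * (el (x * h⁻¹ * g⁻¹ * h * g) * (el g)⁻¹)) *
          ((el g * (el (h * g))⁻¹) * (el (g * h * g) * (el g)⁻¹))) := by
    rw [show (ia g)⁻¹ * (((el h)⁻¹ * el (h * g⁻¹ * h)) * ((el h)⁻¹ * el (g * h)) *
        (((el h)⁻¹ * el (x * h⁻¹ * g⁻¹ * h)) * ((el h)⁻¹ * el (g * h)))) * ia g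
        = ((ia g)⁻¹ * (el h)⁻¹ * ia g) * ((ia g)⁻¹ * el (h * g⁻¹ * h) * ia g) *
          (((ia g)⁻¹ * (el h)⁻¹ * ia g) * ((ia g)⁻¹ * el (g * h) * ia g)) *
          ((((ia g)⁻¹ * (el h)⁻¹ * ia g) * ((ia g)⁻¹ * el (x * h⁻¹ * g⁻¹ * h) * ia g)) *
            (((ia g)⁻¹ * (el h)⁻¹ * ia g) * ((ia g)⁻¹ * el (g * h) * ia g))) from by group]
    simp only [ca', ca'']
  have e5 : (el g * (el (h * g))⁻¹) * (el (h * g⁻¹ * h * g) * (el g)⁻¹) *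
        ((el g * (el (h * g))⁻¹) * (el (g * h * g) * (el g)⁻¹)) *
        (((el g * (el (h * g))⁻¹) * (el (x * h⁻¹ * g⁻¹ * h * g) * (el g)⁻¹)) *
          ((el g * (el (h * g))⁻¹) * (el (g * h * g) * (el g)⁻¹)))
      = el x := by
    calc (el g * (el (h * g))⁻¹) * (el (h * g⁻¹ * h * g) * (el g)⁻¹) *
        ((el g * (el (h * g))⁻¹) * (el (g * h * g) * (el g)⁻¹)) *
        (((el g * (el (h * g))⁻¹) * (el (x * h⁻¹ * g⁻¹ * h * g) * (el g)⁻¹)) *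
          ((el g * (el (h * g))⁻¹) * (el (g * h * g) * (el g)⁻¹)))
        = el g * ((el (h * g))⁻¹ * el (h * g⁻¹ * h * g) * (el (h * g))⁻¹) * el (g * h * g) *
            ((el (h * g))⁻¹ * el (x * h⁻¹ * g⁻¹ * h * g) * (el (h * g))⁻¹) * el (g * h * g) *
            (el g)⁻¹ := by group
      _ = el g * el ((h * g)⁻¹ * (h * g⁻¹ * h * g) * (h * g)⁻¹) * el (g * h * g) *
            el ((h * g)⁻¹ * (x * h⁻¹ * g⁻¹ * h * g) * (h * g)⁻¹) * el (g * h * g) *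
            (el g)⁻¹ := by rw [Sneg, Sneg]
      _ = el g * el (g⁻¹ * g⁻¹) * el (g * h * g) *
            el (g⁻¹ * h⁻¹ * x * h⁻¹ * g⁻¹) * el (g * h * g) * (el g)⁻¹ := by
            rw [show ((h * g)⁻¹ * (h * g⁻¹ * h * g) * (h * g)⁻¹ : G) = g⁻¹ * g⁻¹ from by group,
              show ((h * g)⁻¹ * (x * h⁻¹ * g⁻¹ * h * g) * (h * g)⁻¹ : G)
                = g⁻¹ * h⁻¹ * x * h⁻¹ * g⁻¹ from by group]
      _ = el g * ((el g)⁻¹ * (el g)⁻¹) * el (g * h * g) *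
            el (g⁻¹ * h⁻¹ * x * h⁻¹ * g⁻¹) * el (g * h * g) * (el g)⁻¹ := by
            rw [show el (g⁻¹ * g⁻¹) = (el g)⁻¹ * (el g)⁻¹ from by
              rw [el_sq g⁻¹, el_inv]]
      _ = (el g)⁻¹ * (el (g * h * g) * el (g⁻¹ * h⁻¹ * x * h⁻¹ * g⁻¹) * el (g * h * g)) *
            (el g)⁻¹ := by group
      _ = (el g)⁻¹ * el (g * h * g * (g⁻¹ * h⁻¹ * x * h⁻¹ * g⁻¹) * (g * h * g)) *
            (el g)⁻¹ := by rw [Spos]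
      _ = (el g)⁻¹ * el (g * x * g) * (el g)⁻¹ := by
            rw [show (g * h * g * (g⁻¹ * h⁻¹ * x * h⁻¹ * g⁻¹) * (g * h * g) : G)
              = g * x * g from by group]
      _ = el (g⁻¹ * (g * x * g) * g⁻¹) := by rw [Sneg]
      _ = el x := by rw [show (g⁻¹ * (g * x * g) * g⁻¹ : G) = x from by group]
  calc ((ia g)⁻¹ * (ib h)⁻¹ * ia g * ib h) * el x * ((ia g)⁻¹ * (ib h)⁻¹ * ia g * ib h)⁻¹
      = (ia g)⁻¹ * ((ib h)⁻¹ * (ia g * (ib h * el x * (ib h)⁻¹) * (ia g)⁻¹) * ib h) * ia g := by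
        group
    _ = (ia g)⁻¹ * ((ib h)⁻¹ * (ia g * (el h * el (x * h⁻¹)) * (ia g)⁻¹) * ib h) * ia g := by
        rw [e1]
    _ = (ia g)⁻¹ * ((ib h)⁻¹ * (el (h * g⁻¹) * el g * (el (x * h⁻¹ * g⁻¹) * el g)) * ib h) *
          ia g := by rw [e2]
    _ = (ia g)⁻¹ * (((el h)⁻¹ * el (h * g⁻¹ * h)) * ((el h)⁻¹ * el (g * h)) *
          (((el h)⁻¹ * el (x * h⁻¹ * g⁻¹ * h)) * ((el h)⁻¹ * el (g * h)))) * ia g := by rw [e3]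
    _ = el x := by rw [e4, e5]

/-- `Commute ⁅ia g, ib h⁆ (el x)` in mathlib's commutator convention. -/
lemma key_commute (g h x : G) : Commute ⁅ia g, ib h⁆ (el x) := by
  have k := key g⁻¹ h⁻¹ x
  rw [ia_inv, ib_inv, inv_inv, inv_inv] at k
  have : ⁅ia g, ib h⁆ = ia g * ib h * (ia g)⁻¹ * (ib h)⁻¹ := rfl
  rw [Commute, SemiconjBy, this]
  calc ia g * ib h * (ia g)⁻¹ * (ib h)⁻¹ * el x
      = (ia g * ib h * (ia g)⁻¹ * (ib h)⁻¹) * el x *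
        (ia g * ib h * (ia g)⁻¹ * (ib h)⁻¹)⁻¹ * (ia g * ib h * (ia g)⁻¹ * (ib h)⁻¹) := by group
    _ = el x * (ia g * ib h * (ia g)⁻¹ * (ib h)⁻¹) := by rw [k]

end ChiAux

namespace ChiAux

variable {G : Type*} [Group G]

lemma g1_sup_g2 : chiG1 G ⊔ chiG2 G = ⊤ := by
  have h1 : chiG1 G = (MonoidHom.range (Monoid.Coprod.inl : G →* Monoid.Coprod G G)).map
      (QuotientGroup.mk' (chiRel G)) := MonoidHom.range_comp _ _
  have h2 : chiG2 G = (MonoidHom.range (Monoid.Coprod.inr : G →* Monoid.Coprod G G)).map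
      (QuotientGroup.mk' (chiRel G)) := MonoidHom.range_comp _ _
  show (chiG1 G ⊔ chiG2 G : Subgroup (Monoid.Coprod G G ⧸ chiRel G)) = ⊤
  rw [h1, h2, ← Subgroup.map_sup, Monoid.Coprod.range_inl_sup_range_inr,
    Subgroup.map_top_of_surjective _ (QuotientGroup.mk'_surjective _)]

lemma mem_g1 (g : G) : ia g ∈ chiG1 G := ⟨g, rfl⟩
lemma mem_g2 (g : G) : ib g ∈ chiG2 G := ⟨g, rfl⟩
lemma mem_L (g : G) : el g ∈ chiL G := Subgroup.subset_closure ⟨g, rfl⟩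

lemma ib_eq (g : G) : ib g = ia g * el g := by rw [el]; group

lemma ia_eq (g : G) : ia g = ib g * (el g)⁻¹ := by rw [el]; group

lemma g1_sup_L : chiG1 G ⊔ chiL G = ⊤ := by
  rw [← top_le_iff, ← g1_sup_g2, sup_le_iff]
  constructor
  · exact le_sup_left
  · rintro x ⟨g, rfl⟩
    show ib g ∈ _
    rw [ib_eq]
    exact mul_mem (Subgroup.mem_sup_left (mem_g1 g)) (Subgroup.mem_sup_right (mem_L g))

lemma g2_sup_L : chiG2 G ⊔ chiL G = ⊤ := by
  rw [← top_le_iff, ← g1_sup_g2, sup_le_iff]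
  constructor
  · rintro x ⟨g, rfl⟩
    show ia g ∈ _
    rw [ia_eq]
    exact mul_mem (Subgroup.mem_sup_left (mem_g2 g)) (inv_mem (Subgroup.mem_sup_right (mem_L g)))
  · exact le_sup_left

end ChiAux

namespace ChiAux

section NormalHelpers

variable {M : Type*} [Group M]

/-- if generators of the whole group conjugate generators of `closure S` into `closure S`,
then `closure S` is normal. -/
lemma normal_of_gens {T S : Set M} (hT : Subgroup.closure T = ⊤)
    (h : ∀ t ∈ T, ∀ s ∈ S, t * s * t⁻¹ ∈ Subgroup.closure S ∧
      t⁻¹ * s * t ∈ Subgroup.closure S) :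
    (Subgroup.closure S).Normal := by
  set K := Subgroup.closure S with hK
  have hstep : ∀ t ∈ T, ∀ k ∈ K, t * k * t⁻¹ ∈ K ∧ t⁻¹ * k * t ∈ K := by
    intro t ht k hk
    induction hk using Subgroup.closure_induction with
    | mem s hs => exact h t ht s hs
    | one =>
      refine ⟨?_, ?_⟩
      · have h1 : t * 1 * t⁻¹ = 1 := by group
        rw [h1]; exact one_mem K
      · have h1 : t⁻¹ * 1 * t = 1 := by group
        rw [h1]; exact one_mem K
    | mul x y hx hy hx' hy' =>
      constructor
      · have : t * (x * y) * t⁻¹ = (t * x * t⁻¹) * (t * y * t⁻¹) := by group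
        rw [this]; exact mul_mem hx'.1 hy'.1
      · have : t⁻¹ * (x * y) * t = (t⁻¹ * x * t) * (t⁻¹ * y * t) := by group
        rw [this]; exact mul_mem hx'.2 hy'.2
    | inv x hx hx' =>
      constructor
      · have : t * x⁻¹ * t⁻¹ = (t * x * t⁻¹)⁻¹ := by group
        rw [this]; exact inv_mem hx'.1
      · have : t⁻¹ * x⁻¹ * t = (t⁻¹ * x * t)⁻¹ := by group
        rw [this]; exact inv_mem hx'.2
  let N : Subgroup M :=
    { carrier := {x | ∀ k ∈ K, x * k * x⁻¹ ∈ K ∧ x⁻¹ * k * x ∈ K}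
      one_mem' := by
        intro k hk
        simp only [one_mul, inv_one, mul_one]
        exact ⟨hk, hk⟩
      mul_mem' := by
        intro x y hx hy k hk
        constructor
        · have : x * y * k * (x * y)⁻¹ = x * (y * k * y⁻¹) * x⁻¹ := by group
          rw [this]; exact (hx _ ((hy k hk).1)).1
        · have : (x * y)⁻¹ * k * (x * y) = y⁻¹ * (x⁻¹ * k * x) * y := by group
          rw [this]; exact (hy _ ((hx k hk).2)).2
      inv_mem' := by
        intro x hx k hk
        constructor
        · have : x⁻¹ * k * x⁻¹⁻¹ = x⁻¹ * k * x := by group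
          rw [this]; exact (hx k hk).2
        · have : x⁻¹⁻¹ * k * x⁻¹ = x * k * x⁻¹ := by group
          rw [this]; exact (hx k hk).1 }
  have hTN : T ⊆ N := fun t ht => hstep t ht
  have hN : (⊤ : Subgroup M) ≤ N := by
    rw [← hT]; exact Subgroup.closure_le N |>.mpr hTN
  exact ⟨fun n hn g => by
    have := (hN (Subgroup.mem_top g) n hn).1
    simpa using this⟩

lemma conj_commutator_aux (t p q : M) : t * ⁅p, q⁆ * t⁻¹ = ⁅t * p, q⁆ * ⁅t, q⁆⁻¹ := by
  simp only [commutatorElement_def]; group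

/-- `⁅H, K⁆` is normal whenever `H ⊔ K = ⊤`. -/
lemma commutator_normal_of_sup_eq_top {H K : Subgroup M} (h : H ⊔ K = ⊤) :
    (⁅H, K⁆ : Subgroup M).Normal := by
  rw [Subgroup.commutator_def]
  apply normal_of_gens (T := (H : Set M) ∪ K)
  · rw [Subgroup.closure_union, Subgroup.closure_eq, Subgroup.closure_eq, h]
  · rintro t ht s ⟨p, hp, q, hq, rfl⟩
    rw [← Subgroup.commutator_def]
    have key : ∀ t', t' ∈ H ∨ t' ∈ K → t' * ⁅p, q⁆ * t'⁻¹ ∈ ⁅H, K⁆ := by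
      rintro t' (ht' | ht')
      · rw [conj_commutator_aux]
        exact mul_mem (Subgroup.commutator_mem_commutator (mul_mem ht' hp) hq)
          (inv_mem (Subgroup.commutator_mem_commutator ht' hq))
      · have h1 : t' * ⁅p, q⁆ * t'⁻¹ = (t' * ⁅q, p⁆ * t'⁻¹)⁻¹ := by
          rw [← commutatorElement_inv]; group
        rw [h1, conj_commutator_aux]
        apply inv_mem
        rw [Subgroup.commutator_comm H K]
        exact mul_mem (Subgroup.commutator_mem_commutator (mul_mem ht' hq) hp)
          (inv_mem (Subgroup.commutator_mem_commutator ht' hp))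
    rcases ht with ht | ht
    · have h2 := key t⁻¹ (Or.inl (inv_mem ht))
      rw [inv_inv] at h2
      exact ⟨key t (Or.inl ht), h2⟩
    · have h2 := key t⁻¹ (Or.inr (inv_mem ht))
      rw [inv_inv] at h2
      exact ⟨key t (Or.inr ht), h2⟩

end NormalHelpers

variable {G : Type*} [Group G]

instance normal_L : (chiL G).Normal := by
  rw [chiL]
  apply normal_of_gens (T := (chiG1 G : Set (Chi G)) ∪ (chiG2 G : Set (Chi G)))
  · rw [Subgroup.closure_union, Subgroup.closure_eq, Subgroup.closure_eq, g1_sup_g2]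
  · rintro t ht s ⟨w, rfl⟩
    have hmem : ∀ u : G, (chiIota1 G u)⁻¹ * chiIota2 G u ∈
        Subgroup.closure {x : Chi G | ∃ g : G, x = (chiIota1 G g)⁻¹ * chiIota2 G g} :=
      fun u => Subgroup.subset_closure ⟨u, rfl⟩
    have hmem' : ∀ u : G, el u ∈
        Subgroup.closure {x : Chi G | ∃ g : G, x = (chiIota1 G g)⁻¹ * chiIota2 G g} := hmem
    rcases ht with ⟨u, rfl⟩ | ⟨u, rfl⟩
    · constructor
      · show ia u * el w * (ia u)⁻¹ ∈ _
        rw [ca]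
        exact mul_mem (hmem' _) (hmem' _)
      · show (ia u)⁻¹ * el w * ia u ∈ _
        rw [ca']
        exact mul_mem (hmem' _) (inv_mem (hmem' _))
    · constructor
      · show ib u * el w * (ib u)⁻¹ ∈ _
        rw [cb]
        exact mul_mem (hmem' _) (hmem' _)
      · show (ib u)⁻¹ * el w * ib u ∈ _
        rw [cb']
        exact mul_mem (inv_mem (hmem' _)) (hmem' _)

instance normal_D : (chiD G).Normal := commutator_normal_of_sup_eq_top g1_sup_g2

instance normal_L1 : (chiL1 G).Normal := by
  have : chiL G ⊔ chiG1 G = ⊤ := by rw [sup_comm]; exact g1_sup_L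
  exact commutator_normal_of_sup_eq_top this

instance normal_L2 : (chiL2 G).Normal := by
  have : chiL G ⊔ chiG2 G = ⊤ := by rw [sup_comm]; exact g2_sup_L
  exact commutator_normal_of_sup_eq_top this

lemma L1_le_L : chiL1 G ≤ chiL G := Subgroup.commutator_le_left _ _
lemma L2_le_L : chiL2 G ≤ chiL G := Subgroup.commutator_le_left _ _

end ChiAux

namespace ChiAux

variable {G : Type*} [Group G]

lemma comm_elD_L (g h : G) : ∀ m ∈ chiL G, Commute ⁅ia g, ib h⁆ m := by
  intro m hm
  rw [chiL] at hm
  induction hm using Subgroup.closure_induction with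
  | mem x hx => obtain ⟨w, rfl⟩ := hx; exact key_commute g h w
  | one => exact Commute.one_right _
  | mul x y hx hy hx' hy' => exact hx'.mul_right hy'
  | inv x hx hx' => exact hx'.inv_right

lemma D_le_centralizer_L : chiD G ≤ Subgroup.centralizer (chiL G : Set (Chi G)) := by
  rw [chiD, Subgroup.commutator_le]
  rintro p ⟨g, rfl⟩ q ⟨h, rfl⟩
  rw [Subgroup.mem_centralizer_iff]
  intro m hm
  exact (comm_elD_L g h m hm).symm.eq

lemma comm_DL : ∀ d ∈ chiD G, ∀ m ∈ chiL G, Commute d m := fun d hd m hm =>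
  ((Subgroup.mem_centralizer_iff.mp (D_le_centralizer_L hd)) m hm).symm

section SupHelpers

variable {M : Type*} [Group M]

lemma commutator_le_of_comm {A B Lp : Subgroup M} (hL : Lp ≤ A ⊔ B)
    (hcomm : ∀ a ∈ A, ∀ b ∈ B, Commute a b) : ⁅Lp, A⁆ ≤ A := by
  have hBnorm : B ≤ Subgroup.normalizer (A : Set M) := by
    intro b hb
    rw [Subgroup.mem_normalizer_iff]
    intro h
    constructor
    · intro hh
      have hc : b * h = h * b := (hcomm h hh b hb).symm.eq
      have h2 : b * h * b⁻¹ = h := by rw [hc]; group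
      rw [h2]; exact hh
    · intro hh
      have hc : (b * h * b⁻¹) * b = b * (b * h * b⁻¹) := (hcomm _ hh b hb).eq
      have h3 : h = b * h * b⁻¹ := by
        have h4 : b * h = (b * h * b⁻¹) * b := by group
        calc h = b⁻¹ * (b * h) := by group
          _ = b⁻¹ * ((b * h * b⁻¹) * b) := by rw [← h4]
          _ = b⁻¹ * (b * (b * h * b⁻¹)) := by rw [hc]
          _ = b * h * b⁻¹ := by group
      rw [h3]; exact hh
  have hnorm : Lp ≤ Subgroup.normalizer (A : Set M) := hL.trans (sup_le Subgroup.le_normalizer hBnorm)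
  apply Subgroup.commutator_le.mpr
  intro m hm p hp
  have h1 : m * p * m⁻¹ ∈ A := (Subgroup.mem_normalizer_iff.mp (hnorm hm) p).mp hp
  rw [commutatorElement_def]
  exact mul_mem h1 (inv_mem hp)

end SupHelpers

lemma L12_le_D : (⁅chiL1 G, chiL2 G⁆ : Subgroup (Chi G)) ≤ chiD G := by
  set π := QuotientGroup.mk' (chiD G) with hπ
  have hker : π.ker = chiD G := QuotientGroup.ker_mk' _
  have hcomm : ∀ a ∈ (chiG1 G).map π, ∀ b ∈ (chiG2 G).map π, Commute a b := by
    rintro _ ⟨p, hp, rfl⟩ _ ⟨q, hq, rfl⟩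
    have h1 : π ⁅p, q⁆ = 1 :=
      (QuotientGroup.eq_one_iff _).mpr (Subgroup.commutator_mem_commutator hp hq)
    rw [map_commutatorElement] at h1
    exact commutatorElement_eq_one_iff_commute.mp h1
  have hLsub : (chiL G).map π ≤ (chiG1 G).map π ⊔ (chiG2 G).map π := by
    calc (chiL G).map π ≤ (⊤ : Subgroup (Chi G)).map π := Subgroup.map_mono le_top
      _ = ((chiG1 G) ⊔ (chiG2 G)).map π := by rw [g1_sup_g2]
      _ = (chiG1 G).map π ⊔ (chiG2 G).map π := Subgroup.map_sup _ _ _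
  have hA : (chiL1 G).map π ≤ (chiG1 G).map π := by
    rw [chiL1, Subgroup.map_commutator]
    exact commutator_le_of_comm hLsub hcomm
  have hB : (chiL2 G).map π ≤ (chiG2 G).map π := by
    rw [chiL2, Subgroup.map_commutator]
    refine commutator_le_of_comm (hLsub.trans (le_of_eq (sup_comm _ _))) ?_
    intro a ha b hb
    exact (hcomm b hb a ha).symm
  have hbot : (⁅chiL1 G, chiL2 G⁆ : Subgroup (Chi G)).map π = ⊥ := by
    rw [Subgroup.map_commutator, eq_bot_iff]
    calc ⁅(chiL1 G).map π, (chiL2 G).map π⁆ ≤ ⁅(chiG1 G).map π, (chiG2 G).map π⁆ :=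
          Subgroup.commutator_mono hA hB
      _ = (⁅chiG1 G, chiG2 G⁆ : Subgroup (Chi G)).map π := (Subgroup.map_commutator _ _ _).symm
      _ ≤ ⊥ := by
          show (chiD G).map π ≤ ⊥
          rintro _ ⟨d, hd, rfl⟩
          rw [Subgroup.mem_bot]
          exact (QuotientGroup.eq_one_iff _).mpr hd
  have := (Subgroup.map_eq_bot_iff _).mp hbot
  rwa [hker] at this

end ChiAux

namespace ChiAux

section AbstractSup

variable {M : Type*} [Group M]

lemma comm_sup_of_comm {A B C : Subgroup M} (h1 : ∀ a ∈ A, ∀ c ∈ C, Commute a c)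
    (h2 : ∀ b ∈ B, ∀ c ∈ C, Commute b c) : ∀ x ∈ A ⊔ B, ∀ c ∈ C, Commute x c := by
  intro x hx c hc
  have hAB : (A ⊔ B : Subgroup M) = Subgroup.closure ((A : Set M) ∪ B) := by
    rw [Subgroup.closure_union, Subgroup.closure_eq, Subgroup.closure_eq]
  rw [hAB] at hx
  induction hx using Subgroup.closure_induction with
  | mem z hz => rcases hz with hz | hz
                · exact h1 z hz c hc
                · exact h2 z hz c hc
  | one => exact Commute.one_left _
  | mul p q hp hq hp' hq' => exact hp'.mul_left hq'
  | inv p hp hp' => exact hp'.inv_left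

lemma mem_sup_of_comm {A B : Subgroup M} (hc : ∀ a ∈ A, ∀ b ∈ B, Commute a b) {x : M}
    (hx : x ∈ A ⊔ B) : ∃ a ∈ A, ∃ b ∈ B, x = a * b := by
  let S : Subgroup M :=
    { carrier := {x | ∃ a ∈ A, ∃ b ∈ B, x = a * b}
      one_mem' := ⟨1, one_mem A, 1, one_mem B, by group⟩
      mul_mem' := by
        rintro x y ⟨a, ha, b, hb, rfl⟩ ⟨a', ha', b', hb', rfl⟩
        refine ⟨a * a', mul_mem ha ha', b * b', mul_mem hb hb', ?_⟩
        have h1 : b * a' = a' * b := (hc a' ha' b hb).symm.eq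
        calc a * b * (a' * b') = a * (b * a') * b' := by group
          _ = a * (a' * b) * b' := by rw [h1]
          _ = a * a' * (b * b') := by group
      inv_mem' := by
        rintro x ⟨a, ha, b, hb, rfl⟩
        refine ⟨a⁻¹, inv_mem ha, b⁻¹, inv_mem hb, ?_⟩
        have h1 : b⁻¹ * a⁻¹ = a⁻¹ * b⁻¹ := ((hc a ha b hb).inv_left.inv_right).symm.eq
        calc (a * b)⁻¹ = b⁻¹ * a⁻¹ := by group
          _ = a⁻¹ * b⁻¹ := h1 }
  have hS : A ⊔ B ≤ S := sup_le (fun a ha => ⟨a, ha, 1, one_mem B, by group⟩)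
    (fun b hb => ⟨1, one_mem A, b, hb, by group⟩)
  exact hS hx

lemma commutator_mul_mul {a b a' b' : M} (h2 : Commute a b') (h3 : Commute a' b)
    (h1 : Commute a b) (h4 : Commute a' b') :
    ⁅a * b, a' * b'⁆ = ⁅a, a'⁆ * ⁅b, b'⁆ := by
  have s1 : b * a' = a' * b := h3.symm.eq
  have s2 : b' * a⁻¹ = a⁻¹ * b' := (h2.inv_left).symm.eq
  have s3 : b⁻¹ * a⁻¹ = a⁻¹ * b⁻¹ := (h1.inv_left.inv_right).symm.eq
  have s4 : b'⁻¹ * a'⁻¹ = a'⁻¹ * b'⁻¹ := (h4.inv_left.inv_right).symm.eq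
  have s5 : b⁻¹ * a'⁻¹ = a'⁻¹ * b⁻¹ := (h3.inv_left.inv_right.symm).eq
  have s6 : b * a⁻¹ = a⁻¹ * b := (h1.inv_left).symm.eq
  have s7 : b' * a'⁻¹ = a'⁻¹ * b' := (h4.inv_left).symm.eq
  simp only [commutatorElement_def, mul_inv_rev]
  calc a * b * (a' * b') * (b⁻¹ * a⁻¹) * (b'⁻¹ * a'⁻¹)
      = a * (b * a') * b' * (b⁻¹ * a⁻¹) * (b'⁻¹ * a'⁻¹) := by group
    _ = a * (a' * b) * b' * (b⁻¹ * a⁻¹) * (b'⁻¹ * a'⁻¹) := by rw [s1]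
    _ = a * a' * b * b' * (b⁻¹ * a⁻¹) * (b'⁻¹ * a'⁻¹) := by group
    _ = a * a' * b * b' * (a⁻¹ * b⁻¹) * (b'⁻¹ * a'⁻¹) := by rw [s3]
    _ = a * a' * b * (b' * a⁻¹) * b⁻¹ * (b'⁻¹ * a'⁻¹) := by group
    _ = a * a' * b * (a⁻¹ * b') * b⁻¹ * (b'⁻¹ * a'⁻¹) := by rw [s2]
    _ = a * a' * (b * a⁻¹) * b' * b⁻¹ * (b'⁻¹ * a'⁻¹) := by group
    _ = a * a' * (a⁻¹ * b) * b' * b⁻¹ * (b'⁻¹ * a'⁻¹) := by rw [s6]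
    _ = a * a' * a⁻¹ * b * b' * b⁻¹ * (a'⁻¹ * b'⁻¹) := by rw [← s4]; group
    _ = a * a' * a⁻¹ * b * b' * (b⁻¹ * a'⁻¹) * b'⁻¹ := by group
    _ = a * a' * a⁻¹ * b * b' * (a'⁻¹ * b⁻¹) * b'⁻¹ := by rw [s5]
    _ = a * a' * a⁻¹ * b * (b' * a'⁻¹) * b⁻¹ * b'⁻¹ := by group
    _ = a * a' * a⁻¹ * b * (a'⁻¹ * b') * b⁻¹ * b'⁻¹ := by rw [s7]
    _ = a * a' * a⁻¹ * (b * a'⁻¹) * b' * b⁻¹ * b'⁻¹ := by group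
    _ = a * a' * a⁻¹ * (a'⁻¹ * b) * b' * b⁻¹ * b'⁻¹ := by
        have s8 : b * a'⁻¹ = a'⁻¹ * b := (h3.inv_left).symm.eq
        rw [s8]
    _ = a * a' * a⁻¹ * a'⁻¹ * (b * b' * b⁻¹ * b'⁻¹) := by group

lemma derived_sup_of_comm {A B : Subgroup M} (hc : ∀ a ∈ A, ∀ b ∈ B, Commute a b) :
    (⁅A ⊔ B, A ⊔ B⁆ : Subgroup M) = ⁅A, A⁆ ⊔ ⁅B, B⁆ := by
  apply le_antisymm
  · rw [Subgroup.commutator_le]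
    intro x hx y hy
    obtain ⟨a, ha, b, hb, rfl⟩ := mem_sup_of_comm hc hx
    obtain ⟨a', ha', b', hb', rfl⟩ := mem_sup_of_comm hc hy
    rw [commutator_mul_mul (hc a ha b' hb') (hc a' ha' b hb) (hc a ha b hb) (hc a' ha' b' hb')]
    exact mul_mem (Subgroup.mem_sup_left (Subgroup.commutator_mem_commutator ha ha'))
      (Subgroup.mem_sup_right (Subgroup.commutator_mem_commutator hb hb'))
  · exact sup_le (Subgroup.commutator_mono le_sup_left le_sup_left)
      (Subgroup.commutator_mono le_sup_right le_sup_right)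

lemma comm_all_of_gens {T : Set M} (hT : Subgroup.closure T = ⊤)
    (h : ∀ a ∈ T, ∀ b ∈ T, Commute a b) : ∀ x y : M, Commute x y := by
  have h1 : ∀ y ∈ T, ∀ x : M, Commute x y := by
    intro y hy x
    have hx : x ∈ Subgroup.closure T := by rw [hT]; exact Subgroup.mem_top x
    induction hx using Subgroup.closure_induction with
    | mem z hz => exact h z hz y hy
    | one => exact Commute.one_left _
    | mul p q hp hq hp' hq' => exact hp'.mul_left hq'
    | inv p hp hp' => exact hp'.inv_left
  intro x y
  have hy : y ∈ Subgroup.closure T := by rw [hT]; exact Subgroup.mem_top y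
  induction hy using Subgroup.closure_induction with
  | mem z hz => exact h1 z hz x
  | one => exact Commute.one_right _
  | mul p q hp hq hp' hq' => exact hp'.mul_right hq'
  | inv p hp hp' => exact hp'.inv_right

/-- For normal `A`, `B`: `⁅A ⊔ B, A ⊔ B⁆ ≤ ⁅A,A⁆ ⊔ ⁅B,B⁆ ⊔ ⁅A,B⁆`. -/
lemma derived_sup_le_of_normal (A B : Subgroup M) [A.Normal] [B.Normal] :
    (⁅A ⊔ B, A ⊔ B⁆ : Subgroup M) ≤ ⁅A, A⁆ ⊔ ⁅B, B⁆ ⊔ ⁅A, B⁆ := by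
  set J : Subgroup M := ⁅A, A⁆ ⊔ ⁅B, B⁆ ⊔ ⁅A, B⁆ with hJ
  have : J.Normal := by
    rw [hJ]
    infer_instance
  set ρ := QuotientGroup.mk' J with hρ
  have hcomm : ∀ x ∈ A ⊔ B, ∀ y ∈ A ⊔ B, Commute (ρ x) (ρ y) := by
    have base : ∀ x y : M, (x ∈ A ∧ y ∈ A) ∨ (x ∈ B ∧ y ∈ B) ∨ (x ∈ A ∧ y ∈ B) →
        Commute (ρ x) (ρ y) := by
      rintro x y h
      have hm : ⁅x, y⁆ ∈ J := by
        rcases h with ⟨hx, hy⟩ | ⟨hx, hy⟩ | ⟨hx, hy⟩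
        · exact Subgroup.mem_sup_left (Subgroup.mem_sup_left
            (Subgroup.commutator_mem_commutator hx hy))
        · exact Subgroup.mem_sup_left (Subgroup.mem_sup_right
            (Subgroup.commutator_mem_commutator hx hy))
        · exact Subgroup.mem_sup_right (Subgroup.commutator_mem_commutator hx hy)
      have : ρ ⁅x, y⁆ = 1 := (QuotientGroup.eq_one_iff _).mpr hm
      rw [map_commutatorElement] at this
      exact commutatorElement_eq_one_iff_commute.mp this
    -- now extend to the sup by swapping as needed
    have hAA : ∀ x ∈ A, ∀ y ∈ A, Commute (ρ x) (ρ y) := fun x hx y hy =>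
      base x y (Or.inl ⟨hx, hy⟩)
    have hBB : ∀ x ∈ B, ∀ y ∈ B, Commute (ρ x) (ρ y) := fun x hx y hy =>
      base x y (Or.inr (Or.inl ⟨hx, hy⟩))
    have hAB : ∀ x ∈ A, ∀ y ∈ B, Commute (ρ x) (ρ y) := fun x hx y hy =>
      base x y (Or.inr (Or.inr ⟨hx, hy⟩))
    -- fix y first
    have hy1 : ∀ y ∈ A ⊔ B, ∀ x ∈ A, Commute (ρ x) (ρ y) := by
      intro y hy x hx
      have hAB' : (A ⊔ B : Subgroup M) = Subgroup.closure ((A : Set M) ∪ B) := by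
        rw [Subgroup.closure_union, Subgroup.closure_eq, Subgroup.closure_eq]
      rw [hAB'] at hy
      induction hy using Subgroup.closure_induction with
      | mem z hz => rcases hz with hz | hz
                    · exact hAA x hx z hz
                    · exact hAB x hx z hz
      | one => simpa using Commute.one_right _
      | mul p q hp hq hp' hq' => simpa [map_mul] using hp'.mul_right hq'
      | inv p hp hp' => simpa [map_inv] using hp'.inv_right
    have hy2 : ∀ y ∈ A ⊔ B, ∀ x ∈ B, Commute (ρ x) (ρ y) := by
      intro y hy x hx
      have hAB' : (A ⊔ B : Subgroup M) = Subgroup.closure ((A : Set M) ∪ B) := by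
        rw [Subgroup.closure_union, Subgroup.closure_eq, Subgroup.closure_eq]
      rw [hAB'] at hy
      induction hy using Subgroup.closure_induction with
      | mem z hz => rcases hz with hz | hz
                    · exact (hAB z hz x hx).symm
                    · exact hBB x hx z hz
      | one => simpa using Commute.one_right _
      | mul p q hp hq hp' hq' => simpa [map_mul] using hp'.mul_right hq'
      | inv p hp hp' => simpa [map_inv] using hp'.inv_right
    intro x hx y hy
    have hAB' : (A ⊔ B : Subgroup M) = Subgroup.closure ((A : Set M) ∪ B) := by
      rw [Subgroup.closure_union, Subgroup.closure_eq, Subgroup.closure_eq]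
    rw [hAB'] at hx
    induction hx using Subgroup.closure_induction with
    | mem z hz => rcases hz with hz | hz
                  · exact hy1 y hy z hz
                  · exact hy2 y hy z hz
    | one => simpa using Commute.one_left _
    | mul p q hp hq hp' hq' => simpa [map_mul] using hp'.mul_left hq'
    | inv p hp hp' => simpa [map_inv] using hp'.inv_left
  rw [Subgroup.commutator_le]
  intro x hx y hy
  have h1 : ρ ⁅x, y⁆ = 1 := by
    rw [map_commutatorElement]
    exact (hcomm x hx y hy).commutator_eq
  exact (QuotientGroup.eq_one_iff _).mp h1

end AbstractSup

end ChiAux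

namespace ChiAux

variable {G : Type*} [Group G]

lemma commutator_mul_right_aux {M : Type*} [Group M] (x y z : M) :
    ⁅x, y * z⁆ = ⁅x, y⁆ * (y * ⁅x, z⁆ * y⁻¹) := by
  simp only [commutatorElement_def]; group

lemma commutator_swap_mem {M : Type*} [Group M] {x y : M} {K : Subgroup M}
    (h : ⁅y, x⁆ ∈ K) : ⁅x, y⁆ ∈ K := by
  rw [← inv_inv ⁅x, y⁆, commutatorElement_inv]
  exact inv_mem h

lemma chi1_le : derivedSeries (Chi G) 1 ≤ chiD G ⊔ chiL1 G ⊔ chiL2 G := by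
  set N := chiD G ⊔ chiL1 G ⊔ chiL2 G with hNdef
  have hDN : chiD G ≤ N := le_trans le_sup_left le_sup_left
  have hL1N : chiL1 G ≤ N := le_trans le_sup_right le_sup_left
  have hL2N : chiL2 G ≤ N := le_sup_right
  have hNnormal : N.Normal := by rw [hNdef]; infer_instance
  set ρ := QuotientGroup.mk' N with hρ
  have claim : ∀ p ∈ (chiG1 G : Set (Chi G)) ∪ (chiG2 G : Set (Chi G)),
      ∀ q ∈ (chiG1 G : Set (Chi G)) ∪ (chiG2 G : Set (Chi G)), ⁅p, q⁆ ∈ N := by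
    rintro p (⟨u, rfl⟩ | ⟨u, rfl⟩) q (⟨w, rfl⟩ | ⟨w, rfl⟩)
    · -- G1, G1
      show ⁅ia u, ia w⁆ ∈ N
      rw [ia_eq w, commutator_mul_right_aux]
      refine mul_mem (hDN (Subgroup.commutator_mem_commutator (mem_g1 u) (mem_g2 w))) ?_
      refine hL1N (normal_L1.conj_mem _ ?_ (ib w))
      exact commutator_swap_mem (Subgroup.commutator_mem_commutator
        (inv_mem (mem_L w)) (mem_g1 u))
    · -- G1, G2
      exact hDN (Subgroup.commutator_mem_commutator (mem_g1 u) (mem_g2 w))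
    · -- G2, G1
      exact commutator_swap_mem
        (hDN (Subgroup.commutator_mem_commutator (mem_g1 w) (mem_g2 u)))
    · -- G2, G2
      show ⁅ib u, ib w⁆ ∈ N
      rw [ib_eq w, commutator_mul_right_aux]
      refine mul_mem (commutator_swap_mem
        (hDN (Subgroup.commutator_mem_commutator (mem_g1 w) (mem_g2 u)))) ?_
      refine hL2N (normal_L2.conj_mem _ ?_ (ia w))
      exact commutator_swap_mem (Subgroup.commutator_mem_commutator (mem_L w) (mem_g2 u))
  have hgen : Subgroup.closure (ρ '' ((chiG1 G : Set (Chi G)) ∪ (chiG2 G : Set (Chi G)))) = ⊤ := by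
    rw [← MonoidHom.map_closure, Subgroup.closure_union, Subgroup.closure_eq,
      Subgroup.closure_eq, g1_sup_g2, Subgroup.map_top_of_surjective]
    exact QuotientGroup.mk'_surjective _
  have hQcomm : ∀ x y : Chi G ⧸ N, Commute x y := by
    apply comm_all_of_gens hgen
    rintro _ ⟨p, hp, rfl⟩ _ ⟨q, hq, rfl⟩
    have h1 : ρ ⁅p, q⁆ = 1 := (QuotientGroup.eq_one_iff _).mpr (claim p hp q hq)
    rw [map_commutatorElement] at h1
    exact commutatorElement_eq_one_iff_commute.mp h1
  rw [derivedSeries_succ, derivedSeries_zero, Subgroup.commutator_le]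
  intro x _ y _
  have h1 : ρ ⁅x, y⁆ = 1 := by
    rw [map_commutatorElement]
    exact (hQcomm (ρ x) (ρ y)).commutator_eq
  exact (QuotientGroup.eq_one_iff _).mp h1

lemma L12_le_L : (⁅chiL1 G, chiL2 G⁆ : Subgroup (Chi G)) ≤ chiL G :=
  (Subgroup.commutator_mono L1_le_L L2_le_L).trans (Subgroup.commutator_le_left (chiL G) (chiL G))

lemma comm_L12_any : ∀ w ∈ (⁅chiL1 G, chiL2 G⁆ : Subgroup (Chi G)), ∀ m ∈ chiL G,
    Commute w m := fun w hw m hm => comm_DL w (L12_le_D hw) m hm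

lemma L12_L1_bot : (⁅(⁅chiL1 G, chiL2 G⁆ : Subgroup (Chi G)), chiL1 G⁆ : Subgroup (Chi G)) = ⊥ := by
  rw [eq_bot_iff, Subgroup.commutator_le]
  intro w hw p hp
  rw [Subgroup.mem_bot]
  exact (comm_L12_any w hw p (L1_le_L hp)).commutator_eq

lemma L1der_L2_bot :
    (⁅(⁅chiL1 G, chiL1 G⁆ : Subgroup (Chi G)), chiL2 G⁆ : Subgroup (Chi G)) = ⊥ := by
  apply Subgroup.commutator_commutator_eq_bot_of_rotate
  · exact L12_L1_bot
  · rw [Subgroup.commutator_comm (chiL2 G) (chiL1 G)]; exact L12_L1_bot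

lemma comm_L1d_L2 : ∀ u ∈ (⁅chiL1 G, chiL1 G⁆ : Subgroup (Chi G)), ∀ v ∈ chiL2 G,
    Commute u v := by
  intro u hu v hv
  have h1 : ⁅u, v⁆ ∈ (⊥ : Subgroup (Chi G)) := by
    rw [← L1der_L2_bot]
    exact Subgroup.commutator_mem_commutator hu hv
  rw [Subgroup.mem_bot] at h1
  exact commutatorElement_eq_one_iff_commute.mp h1

section DerivedSub

variable {M : Type*} [Group M]

lemma commutator_self_le (X : Subgroup M) : (⁅X, X⁆ : Subgroup M) ≤ X :=
  Subgroup.commutator_le.mpr fun p hp q hq => by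
    rw [commutatorElement_def]
    exact mul_mem (mul_mem (mul_mem hp hq) (inv_mem hp)) (inv_mem hq)

lemma derivedSub_mono {K K' : Subgroup M} (h : K ≤ K') : ∀ n, derivedSub K n ≤ derivedSub K' n
  | 0 => h
  | n + 1 => Subgroup.commutator_mono (derivedSub_mono h n) (derivedSub_mono h n)

lemma derivedSub_le_self (K : Subgroup M) : ∀ n, derivedSub K n ≤ K
  | 0 => le_rfl
  | n + 1 => (commutator_self_le _).trans (derivedSub_le_self K n)

lemma derivedSub_le_one (K : Subgroup M) : ∀ k, 1 ≤ k → derivedSub K k ≤ derivedSub K 1 := by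
  intro k hk
  induction k, hk using Nat.le_induction with
  | base => exact le_rfl
  | succ n hn ih => exact (commutator_self_le _).trans ih

lemma derivedSeries_shift : ∀ n, derivedSeries M (n + 1) = derivedSub (derivedSeries M 1) n
  | 0 => rfl
  | n + 1 => by
      rw [derivedSeries_succ, derivedSeries_shift n]
      rfl

end DerivedSub

end ChiAux

namespace ChiAux

variable {G : Type*} [Group G]

lemma derivedSub_succ' {M : Type*} [Group M] (K : Subgroup M) (n : ℕ) :
    derivedSub K (n + 1) = ⁅derivedSub K n, derivedSub K n⁆ := rfl

lemma D_le_der1 : chiD G ≤ derivedSeries (Chi G) 1 := by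
  rw [derivedSeries_succ, derivedSeries_zero]
  exact Subgroup.commutator_mono le_top le_top

lemma L1_le_der1 : chiL1 G ≤ derivedSeries (Chi G) 1 := by
  rw [derivedSeries_succ, derivedSeries_zero]
  exact Subgroup.commutator_mono le_top le_top

lemma L2_le_der1 : chiL2 G ≤ derivedSeries (Chi G) 1 := by
  rw [derivedSeries_succ, derivedSeries_zero]
  exact Subgroup.commutator_mono le_top le_top

lemma comm_Dk_L1m (k m : ℕ) : ∀ a ∈ derivedSub (chiD G) k, ∀ b ∈ derivedSub (chiL1 G) m,
    Commute a b := fun a ha b hb =>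
  comm_DL a (derivedSub_le_self _ k ha) b (L1_le_L (derivedSub_le_self _ m hb))

lemma comm_Dk_L2m (k m : ℕ) : ∀ a ∈ derivedSub (chiD G) k, ∀ b ∈ derivedSub (chiL2 G) m,
    Commute a b := fun a ha b hb =>
  comm_DL a (derivedSub_le_self _ k ha) b (L2_le_L (derivedSub_le_self _ m hb))

lemma comm_L1k_L2m (k m : ℕ) (hk : 1 ≤ k) : ∀ a ∈ derivedSub (chiL1 G) k,
    ∀ b ∈ derivedSub (chiL2 G) m, Commute a b := fun a ha b hb =>
  comm_L1d_L2 a (derivedSub_le_one _ k hk ha) b (derivedSub_le_self _ m hb)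

lemma comm_Dk_sup (k : ℕ) : ∀ a ∈ derivedSub (chiD G) k,
    ∀ b ∈ derivedSub (chiL1 G) k ⊔ derivedSub (chiL2 G) k, Commute a b := by
  intro a ha b hb
  refine comm_DL a (derivedSub_le_self _ k ha) b ?_
  exact (sup_le ((derivedSub_le_self _ k).trans L1_le_L)
    ((derivedSub_le_self _ k).trans L2_le_L)) hb

lemma comm_D_supL : ∀ a ∈ chiD G, ∀ b ∈ chiL1 G ⊔ chiL2 G, Commute a b :=
  fun a ha b hb => comm_DL a ha b ((sup_le L1_le_L L2_le_L) hb)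

lemma der_sup_step (k : ℕ) (hk : 1 ≤ k) :
    (⁅derivedSub (chiD G) k ⊔ derivedSub (chiL1 G) k ⊔ derivedSub (chiL2 G) k,
      derivedSub (chiD G) k ⊔ derivedSub (chiL1 G) k ⊔ derivedSub (chiL2 G) k⁆ : Subgroup (Chi G))
    = derivedSub (chiD G) (k + 1) ⊔ derivedSub (chiL1 G) (k + 1) ⊔ derivedSub (chiL2 G) (k + 1)
    := by
  rw [sup_assoc (derivedSub (chiD G) k), derived_sup_of_comm (comm_Dk_sup k),
    derived_sup_of_comm (comm_L1k_L2m k k hk), derivedSub_succ', derivedSub_succ',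
    derivedSub_succ', sup_assoc]

lemma main_eq (k : ℕ) (hk : 2 ≤ k) :
    derivedSeries (Chi G) (k + 1) =
      derivedSub (chiD G) k ⊔ derivedSub (chiL1 G) k ⊔ derivedSub (chiL2 G) k := by
  induction k, hk using Nat.le_induction with
  | base =>
    apply le_antisymm
    · -- upper bound
      have h0 : derivedSeries (Chi G) (2 + 1) = derivedSub (derivedSeries (Chi G) 1) 2 :=
        derivedSeries_shift 2
      have h1 : derivedSub (derivedSeries (Chi G) 1) 2
          ≤ derivedSub (chiD G ⊔ chiL1 G ⊔ chiL2 G) 2 := derivedSub_mono chi1_le 2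
      set X : Subgroup (Chi G) := ⁅chiD G, chiD G⁆ ⊔ ⁅chiL1 G, chiL2 G⁆ with hX
      set Y : Subgroup (Chi G) := ⁅chiL1 G, chiL1 G⁆ ⊔ ⁅chiL2 G, chiL2 G⁆ with hY
      have hXD : X ≤ chiD G := sup_le (commutator_self_le _) L12_le_D
      have hYL : Y ≤ chiL G := sup_le ((commutator_self_le _).trans L1_le_L)
        ((commutator_self_le _).trans L2_le_L)
      have h2 : (⁅chiD G ⊔ chiL1 G ⊔ chiL2 G, chiD G ⊔ chiL1 G ⊔ chiL2 G⁆ : Subgroup (Chi G))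
          ≤ X ⊔ Y := by
        rw [sup_assoc (chiD G), derived_sup_of_comm comm_D_supL]
        refine sup_le (le_trans le_sup_left le_sup_left) ?_
        refine le_trans (derived_sup_le_of_normal (chiL1 G) (chiL2 G)) ?_
        refine sup_le (sup_le ?_ ?_) ?_
        · exact le_trans le_sup_left le_sup_right
        · exact le_trans le_sup_right le_sup_right
        · exact le_trans le_sup_right le_sup_left
      have h4 : (⁅X ⊔ Y, X ⊔ Y⁆ : Subgroup (Chi G)) = ⁅X, X⁆ ⊔ ⁅Y, Y⁆ := by
        refine derived_sup_of_comm ?_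
        intro x hx y hy
        exact comm_DL x (hXD hx) y (hYL hy)
      have h5 : (⁅X, X⁆ : Subgroup (Chi G)) = derivedSub (chiD G) 2 ⊔ ⊥ := by
        rw [hX, derived_sup_of_comm (fun a ha b hb =>
          comm_DL a (commutator_self_le _ ha) b (L12_le_L hb))]
        congr 1
        rw [eq_bot_iff, Subgroup.commutator_le]
        intro w hw w' hw'
        rw [Subgroup.mem_bot]
        exact (comm_DL w (L12_le_D hw) w' (L12_le_L hw')).commutator_eq
      have h7 : (⁅Y, Y⁆ : Subgroup (Chi G))
          = derivedSub (chiL1 G) 2 ⊔ derivedSub (chiL2 G) 2 := by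
        rw [hY, derived_sup_of_comm (fun a ha b hb =>
          comm_L1d_L2 a ha b (commutator_self_le _ hb))]
        rfl
      calc derivedSeries (Chi G) (2 + 1) = derivedSub (derivedSeries (Chi G) 1) 2 := h0
        _ ≤ derivedSub (chiD G ⊔ chiL1 G ⊔ chiL2 G) 2 := h1
        _ = ⁅(⁅chiD G ⊔ chiL1 G ⊔ chiL2 G, chiD G ⊔ chiL1 G ⊔ chiL2 G⁆ : Subgroup (Chi G)),
            (⁅chiD G ⊔ chiL1 G ⊔ chiL2 G, chiD G ⊔ chiL1 G ⊔ chiL2 G⁆ : Subgroup (Chi G))⁆ :=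
            rfl
        _ ≤ ⁅X ⊔ Y, X ⊔ Y⁆ := Subgroup.commutator_mono h2 h2
        _ = (derivedSub (chiD G) 2 ⊔ ⊥) ⊔ (derivedSub (chiL1 G) 2 ⊔ derivedSub (chiL2 G) 2) :=
            by rw [h4, h5, h7]
        _ = derivedSub (chiD G) 2 ⊔ derivedSub (chiL1 G) 2 ⊔ derivedSub (chiL2 G) 2 := by
            rw [sup_bot_eq, sup_assoc]
    · -- lower bound
      refine sup_le (sup_le ?_ ?_) ?_
      · exact (derivedSub_mono D_le_der1 2).trans (le_of_eq (derivedSeries_shift 2).symm)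
      · exact (derivedSub_mono L1_le_der1 2).trans (le_of_eq (derivedSeries_shift 2).symm)
      · exact (derivedSub_mono L2_le_der1 2).trans (le_of_eq (derivedSeries_shift 2).symm)
  | succ n hn ih =>
    rw [derivedSeries_succ, ih, der_sup_step n (le_trans one_le_two hn)]

end ChiAux

open ChiAux in
theorem chi_higher_derived_central_product' (G : Type*) [Group G] (k : ℕ) (hk : 2 ≤ k) :
    derivedSeries (Chi G) (k + 1) =
      derivedSub (chiD G) k ⊔ derivedSub (chiL1 G) k ⊔ derivedSub (chiL2 G) k ∧
    ⁅derivedSub (chiD G) k, derivedSub (chiL1 G) k⁆ = ⊥ ∧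
    ⁅derivedSub (chiD G) k, derivedSub (chiL2 G) k⁆ = ⊥ ∧
    ⁅derivedSub (chiL1 G) k, derivedSub (chiL2 G) k⁆ = ⊥ ∧
    (∀ x ∈ derivedSub (chiD G) k ⊓ (derivedSub (chiL1 G) k ⊔ derivedSub (chiL2 G) k),
      ∀ y ∈ derivedSeries (Chi G) (k + 1), x * y = y * x) ∧
    (∀ x ∈ derivedSub (chiL1 G) k ⊓ (derivedSub (chiD G) k ⊔ derivedSub (chiL2 G) k),
      ∀ y ∈ derivedSeries (Chi G) (k + 1), x * y = y * x) ∧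
    (∀ x ∈ derivedSub (chiL2 G) k ⊓ (derivedSub (chiD G) k ⊔ derivedSub (chiL1 G) k),
      ∀ y ∈ derivedSeries (Chi G) (k + 1), x * y = y * x) := by
  have hk1 : 1 ≤ k := le_trans one_le_two hk
  have hmain := main_eq (G := G) k hk
  -- decomposition of elements of the derived series
  have hdecomp : ∀ y ∈ derivedSeries (Chi G) (k + 1),
      ∃ d ∈ derivedSub (chiD G) k, ∃ u ∈ derivedSub (chiL1 G) k,
        ∃ v ∈ derivedSub (chiL2 G) k, y = d * u * v := by
    intro y hy
    rw [hmain] at hy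
    obtain ⟨w, hw, v, hv, rfl⟩ := mem_sup_of_comm
      (comm_sup_of_comm (comm_Dk_L2m k k) (comm_L1k_L2m k k hk1)) hy
    obtain ⟨d, hd, u, hu, rfl⟩ := mem_sup_of_comm (comm_Dk_L1m k k) hw
    exact ⟨d, hd, u, hu, v, hv, rfl⟩
  refine ⟨hmain, ?_, ?_, ?_, ?_, ?_, ?_⟩
  · rw [eq_bot_iff, Subgroup.commutator_le]
    intro a ha b hb
    rw [Subgroup.mem_bot]
    exact (comm_Dk_L1m k k a ha b hb).commutator_eq
  · rw [eq_bot_iff, Subgroup.commutator_le]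
    intro a ha b hb
    rw [Subgroup.mem_bot]
    exact (comm_Dk_L2m k k a ha b hb).commutator_eq
  · rw [eq_bot_iff, Subgroup.commutator_le]
    intro a ha b hb
    rw [Subgroup.mem_bot]
    exact (comm_L1k_L2m k k hk1 a ha b hb).commutator_eq
  · -- x ∈ D-part
    rintro x ⟨hx1, hx2⟩ y hy
    obtain ⟨d, hd, u, hu, v, hv, rfl⟩ := hdecomp y hy
    have hxL : x ∈ chiL G := (sup_le ((derivedSub_le_self _ k).trans L1_le_L)
      ((derivedSub_le_self _ k).trans L2_le_L)) hx2
    have c1 : Commute x d := (comm_DL d (derivedSub_le_self _ k hd) x hxL).symm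
    have c2 : Commute x u := comm_Dk_L1m k k x hx1 u hu
    have c3 : Commute x v := comm_Dk_L2m k k x hx1 v hv
    exact ((c1.mul_right c2).mul_right c3).eq
  · -- x ∈ L1-part
    rintro x ⟨hx1, hx2⟩ y hy
    obtain ⟨d, hd, u, hu, v, hv, rfl⟩ := hdecomp y hy
    have c1 : Commute x d :=
      (comm_DL d (derivedSub_le_self _ k hd) x (L1_le_L (derivedSub_le_self _ k hx1))).symm
    have c3 : Commute x v := comm_L1k_L2m k k hk1 x hx1 v hv
    have c2 : Commute x u := by
      obtain ⟨d', hd', v', hv', hxeq⟩ := mem_sup_of_comm (comm_Dk_L2m k k) hx2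
      rw [hxeq]
      exact Commute.mul_left (comm_Dk_L1m k k d' hd' u hu)
        ((comm_L1k_L2m k k hk1 u hu v' hv').symm)
    exact ((c1.mul_right c2).mul_right c3).eq
  · -- x ∈ L2-part
    rintro x ⟨hx1, hx2⟩ y hy
    obtain ⟨d, hd, u, hu, v, hv, rfl⟩ := hdecomp y hy
    have c1 : Commute x d :=
      (comm_DL d (derivedSub_le_self _ k hd) x (L2_le_L (derivedSub_le_self _ k hx1))).symm
    have c2 : Commute x u := (comm_L1k_L2m k k hk1 u hu x hx1).symm
    have c3 : Commute x v := by
      obtain ⟨d', hd', u', hu', hxeq⟩ := mem_sup_of_comm (comm_Dk_L1m k k) hx2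
      rw [hxeq]
      exact Commute.mul_left (comm_Dk_L2m k k d' hd' v hv)
        (comm_L1k_L2m k k hk1 u' hu' v hv)
    exact ((c1.mul_right c2).mul_right c3).eq

theorem chi_higher_derived_central_product (G : Type*) [Group G] (k : ℕ) (hk : 2 ≤ k) :
    derivedSeries (Chi G) (k + 1) =
      derivedSub (chiD G) k ⊔ derivedSub (chiL1 G) k ⊔ derivedSub (chiL2 G) k ∧
    ⁅derivedSub (chiD G) k, derivedSub (chiL1 G) k⁆ = ⊥ ∧
    ⁅derivedSub (chiD G) k, derivedSub (chiL2 G) k⁆ = ⊥ ∧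
    ⁅derivedSub (chiL1 G) k, derivedSub (chiL2 G) k⁆ = ⊥ ∧
    (∀ x ∈ derivedSub (chiD G) k ⊓ (derivedSub (chiL1 G) k ⊔ derivedSub (chiL2 G) k),
      ∀ y ∈ derivedSeries (Chi G) (k + 1), x * y = y * x) ∧
    (∀ x ∈ derivedSub (chiL1 G) k ⊓ (derivedSub (chiD G) k ⊔ derivedSub (chiL2 G) k),
      ∀ y ∈ derivedSeries (Chi G) (k + 1), x * y = y * x) ∧
    (∀ x ∈ derivedSub (chiL2 G) k ⊓ (derivedSub (chiD G) k ⊔ derivedSub (chiL1 G) k),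
      ∀ y ∈ derivedSeries (Chi G) (k + 1), x * y = y * x) := by
  exact chi_higher_derived_central_product' G k hk
end
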